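/- arXiv:1009.1594 — 8 statements merged into one kernel-verified Lean document; each statement's English description precedes it below -/
import Mathlib

section
/- Let X be a real Banach space and let φ_1, …, φ_m : X → (−∞, ∞] be convex lower semicontinuous functions. Assume there exists a point x̄ ∈ ⋂_{i=1}^m dom φ_i at which all except possibly one of the functions φ_1, …, φ_m are continuous. Then ∂(φ_1 + … + φ_m)(x̄) = ∂φ_1(x̄) + … + ∂φ_m(x̄), where the sum on the right is the Minkowski sum of sets in X*. -/
open scoped Pointwise

/-- The subdifferential of convex analysis of an extended-real-valued function
`φ : X → (−∞, ∞]` (modeled as `X → EReal`) at `xb`, as a set of continuous linear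
functionals. -/
def subdiff {X : Type*} [NormedAddCommGroup X] [NormedSpace ℝ X]
    (φ : X → EReal) (xb : X) : Set (X →L[ℝ] ℝ) :=
  {p | ∀ x : X, ((p (x - xb) : ℝ) : EReal) + φ xb ≤ φ x}

open Filter Topology Set

section Aux

/-- distributivity of multiplication by a nonnegative real over EReal addition,
assuming no `⊥`. -/
lemma mr_distrib {r : ℝ} (hr : 0 ≤ r) {a b : EReal} (ha : a ≠ ⊥) (hb : b ≠ ⊥) :
    (r : EReal) * (a + b) = (r : EReal) * a + (r : EReal) * b := by
  rcases eq_or_lt_of_le hr with h0 | hpos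
  · simp [← h0]
  · induction a using EReal.rec with
    | bot => exact absurd rfl ha
    | top =>
        induction b using EReal.rec with
        | bot => exact absurd rfl hb
        | top => simp [EReal.coe_mul_top_of_pos hpos]
        | coe y =>
            rw [EReal.top_add_of_ne_bot hb, EReal.coe_mul_top_of_pos hpos, ← EReal.coe_mul,
              EReal.top_add_of_ne_bot (EReal.coe_ne_bot _)]
    | coe x =>
        induction b using EReal.rec with
        | bot => exact absurd rfl hb
        | top =>
            rw [EReal.add_top_of_ne_bot ha, EReal.coe_mul_top_of_pos hpos, ← EReal.coe_mul,
              EReal.add_top_of_ne_bot (EReal.coe_ne_bot _)]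
        | coe y =>
            rw [← EReal.coe_add, ← EReal.coe_mul, ← EReal.coe_mul, ← EReal.coe_mul,
              ← EReal.coe_add, mul_add]

/-- A continuous linear functional which is `< u` on the interior of a convex set
with nonempty interior is `≤ u` on the whole set. -/
lemma mr_sep_le_on {E : Type*} [AddCommGroup E] [Module ℝ E] [TopologicalSpace E]
    [IsTopologicalAddGroup E] [ContinuousSMul ℝ E] {s : Set E} (hs : Convex ℝ s) {w : E}
    (hw : w ∈ interior s) (F : E →L[ℝ] ℝ) {u : ℝ} (h : ∀ y ∈ interior s, F y < u)
    {z : E} (hz : z ∈ s) : F z ≤ u := by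
  have hcont : Continuous (fun b : ℝ => (1 - b) • z + b • w) := by
    continuity
  have tend : Tendsto (fun b : ℝ => (1 - b) • z + b • w) (𝓝[>] (0:ℝ)) (𝓝 z) := by
    have h1 : Tendsto (fun b : ℝ => (1 - b) • z + b • w) (𝓝 0)
        (𝓝 ((1 - (0:ℝ)) • z + (0:ℝ) • w)) := hcont.tendsto 0
    simp only [sub_zero, one_smul, zero_smul, add_zero] at h1
    exact h1.mono_left nhdsWithin_le_nhds
  refine le_of_tendsto ((F.continuous.tendsto z).comp tend) ?_
  filter_upwards [Ioo_mem_nhdsGT_of_mem (Set.left_mem_Ico.2 one_pos)] with b hb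
  exact (h _ (hs.combo_self_interior_mem_interior hz hw (by linarith [hb.2]) hb.1
    (by ring))).le

variable {X : Type*} [NormedAddCommGroup X] [NormedSpace ℝ X]

lemma mr_easy (f g : X → EReal) (xb : X) :
    subdiff f xb + subdiff g xb ⊆ subdiff (fun x => f x + g x) xb := by
  intro p hp
  rw [Set.mem_add] at hp
  obtain ⟨q1, hq1, q2, hq2, rfl⟩ := hp
  intro x
  have h1 := hq1 x
  have h2 := hq2 x
  have hsum := add_le_add h1 h2
  refine le_trans (le_of_eq ?_) hsum
  show ((((q1 + q2) (x - xb) : ℝ)) : EReal) + (f xb + g xb) = _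
  rw [ContinuousLinearMap.add_apply, EReal.coe_add]
  exact add_add_add_comm _ _ _ _

/-- Moreau–Rockafellar for two functions, one of which is continuous at the point. -/
lemma mr_two (f g : X → EReal) (hfbot : ∀ x, f x ≠ ⊥) (hgbot : ∀ x, g x ≠ ⊥)
    (hfconv : ∀ (x y : X) (t : ℝ), 0 ≤ t → t ≤ 1 →
      f (t • x + (1 - t) • y) ≤ (t : EReal) * f x + ((1 - t : ℝ) : EReal) * f y)
    (hgconv : ∀ (x y : X) (t : ℝ), 0 ≤ t → t ≤ 1 →
      g (t • x + (1 - t) • y) ≤ (t : EReal) * g x + ((1 - t : ℝ) : EReal) * g y)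
    (xb : X) (hft : f xb ≠ ⊤) (hgt : g xb ≠ ⊤) (hgc : ContinuousAt g xb) :
    subdiff (fun x => f x + g x) xb = subdiff f xb + subdiff g xb := by
  refine Set.Subset.antisymm ?_ (mr_easy f g xb)
  intro p hp
  have hp' : ∀ x : X, ((p (x - xb) : ℝ) : EReal) + (f xb + g xb) ≤ f x + g x := hp
  set fb := (f xb).toReal with hfbdef
  set gb := (g xb).toReal with hgbdef
  have hfbe : f xb = (fb : EReal) := (EReal.coe_toReal hft (hfbot xb)).symm
  have hgbe : g xb = (gb : EReal) := (EReal.coe_toReal hgt (hgbot xb)).symm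
  set A : Set (X × ℝ) := {z | f z.1 ≤ ((fb + p (z.1 - xb) + z.2 : ℝ) : EReal)} with hA
  set U : Set (X × ℝ) := {z | g z.1 < ((gb - z.2 : ℝ) : EReal)} with hU
  -- convexity of A
  have hAconv : Convex ℝ A := by
    rintro ⟨x1, t1⟩ h1 ⟨x2, t2⟩ h2 a b ha hb hab
    simp only [hA, Set.mem_setOf_eq] at h1 h2 ⊢
    have hx1t : f x1 ≠ ⊤ := (lt_of_le_of_lt h1 (EReal.coe_lt_top _)).ne
    have hx2t : f x2 ≠ ⊤ := (lt_of_le_of_lt h2 (EReal.coe_lt_top _)).ne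
    have hx1 : f x1 = ((f x1).toReal : EReal) := (EReal.coe_toReal hx1t (hfbot x1)).symm
    have hx2 : f x2 = ((f x2).toReal : EReal) := (EReal.coe_toReal hx2t (hfbot x2)).symm
    have hb' : b = 1 - a := by linarith
    have key := hfconv x1 x2 a ha (by linarith)
    rw [hx1, hx2, ← EReal.coe_mul, ← EReal.coe_mul, ← EReal.coe_add, ← hb'] at key
    rw [hx1] at h1
    rw [hx2] at h2
    rw [EReal.coe_le_coe_iff] at h1 h2
    have hsm : (a • (x1, t1) + b • (x2, t2) : X × ℝ) = (a • x1 + b • x2, a * t1 + b * t2) := by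
      simp [Prod.ext_iff, smul_eq_mul]
    rw [hsm]
    show f (a • x1 + b • x2) ≤ ((fb + p (a • x1 + b • x2 - xb) + (a * t1 + b * t2) : ℝ) : EReal)
    have hgoal : f (a • x1 + b • x2) ≤ ((a * (f x1).toReal + b * (f x2).toReal : ℝ) : EReal) := by
      rw [hb'] at key ⊢
      exact key
    refine hgoal.trans (EReal.coe_le_coe_iff.2 ?_)
    have e2 : p (a • x1 + b • x2 - xb) = a * p x1 + b * p x2 - p xb := by
      rw [map_sub, map_add, map_smul, map_smul]; simp [smul_eq_mul]
    have e1 : p (x1 - xb) = p x1 - p xb := map_sub _ _ _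
    have e1' : p (x2 - xb) = p x2 - p xb := map_sub _ _ _
    rw [e1] at h1; rw [e1'] at h2; rw [e2]
    subst hb'
    nlinarith [mul_le_mul_of_nonneg_left h1 ha, mul_le_mul_of_nonneg_left h2 hb]
  -- convexity of U
  have hUconv : Convex ℝ U := by
    rintro ⟨x1, t1⟩ h1 ⟨x2, t2⟩ h2 a b ha hb hab
    simp only [hU, Set.mem_setOf_eq] at h1 h2 ⊢
    have hx1t : g x1 ≠ ⊤ := (lt_trans h1 (EReal.coe_lt_top _)).ne
    have hx2t : g x2 ≠ ⊤ := (lt_trans h2 (EReal.coe_lt_top _)).ne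
    have hx1 : g x1 = ((g x1).toReal : EReal) := (EReal.coe_toReal hx1t (hgbot x1)).symm
    have hx2 : g x2 = ((g x2).toReal : EReal) := (EReal.coe_toReal hx2t (hgbot x2)).symm
    have hb' : b = 1 - a := by linarith
    have key := hgconv x1 x2 a ha (by linarith)
    rw [hx1, hx2, ← EReal.coe_mul, ← EReal.coe_mul, ← EReal.coe_add, ← hb'] at key
    rw [hx1] at h1
    rw [hx2] at h2
    rw [EReal.coe_lt_coe_iff] at h1 h2
    have hsm : (a • (x1, t1) + b • (x2, t2) : X × ℝ) = (a • x1 + b • x2, a * t1 + b * t2) := by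
      simp [Prod.ext_iff, smul_eq_mul]
    rw [hsm]
    show g (a • x1 + b • x2) < ((gb - (a * t1 + b * t2) : ℝ) : EReal)
    have hgoal : g (a • x1 + b • x2) ≤ ((a * (g x1).toReal + b * (g x2).toReal : ℝ) : EReal) := by
      rw [hb'] at key ⊢
      exact key
    refine lt_of_le_of_lt hgoal (EReal.coe_lt_coe_iff.2 ?_)
    subst hb'
    rcases eq_or_lt_of_le ha with ha0 | hapos
    · rw [← ha0]; simp only [zero_mul, sub_zero, zero_add, one_mul]; linarith
    · nlinarith [mul_lt_mul_of_pos_left h1 hapos, mul_le_mul_of_nonneg_left h2.le hb]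
  -- disjointness
  have hdisj : Disjoint (interior U) A := by
    rw [Set.disjoint_left]
    rintro ⟨x, t⟩ hzU hzA
    have hzU' : (x, t) ∈ U := interior_subset hzU
    simp only [hU, Set.mem_setOf_eq] at hzU'
    simp only [hA, Set.mem_setOf_eq] at hzA
    have hgxt : g x ≠ ⊤ := (lt_trans hzU' (EReal.coe_lt_top _)).ne
    have hfxt : f x ≠ ⊤ := (lt_of_le_of_lt hzA (EReal.coe_lt_top _)).ne
    have hgx : g x = ((g x).toReal : EReal) := (EReal.coe_toReal hgxt (hgbot x)).symm
    have hfx : f x = ((f x).toReal : EReal) := (EReal.coe_toReal hfxt (hfbot x)).symm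
    have h := hp' x
    rw [hfbe, hgbe, hfx, hgx, ← EReal.coe_add, ← EReal.coe_add, ← EReal.coe_add,
      EReal.coe_le_coe_iff] at h
    rw [hgx, EReal.coe_lt_coe_iff] at hzU'
    rw [hfx, EReal.coe_le_coe_iff] at hzA
    linarith
  -- an interior point of U
  have hV : g ⁻¹' (Set.Iio ((gb + 1 : ℝ) : EReal)) ∈ 𝓝 xb := by
    refine hgc.preimage_mem_nhds (isOpen_Iio.mem_nhds ?_)
    rw [hgbe]
    exact Set.mem_Iio.2 (EReal.coe_lt_coe_iff.2 (lt_add_one gb))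
  have hw : ((xb, (-2 : ℝ)) : X × ℝ) ∈ interior U := by
    rw [mem_interior_iff_mem_nhds, nhds_prod_eq]
    refine Filter.mem_of_superset (Filter.prod_mem_prod hV (Iio_mem_nhds (by norm_num : (-2:ℝ) < -1))) ?_
    rintro ⟨x, t⟩ ⟨hx, ht⟩
    simp only [Set.mem_preimage, Set.mem_Iio] at hx ht
    show g x < ((gb - t : ℝ) : EReal)
    exact lt_of_lt_of_le hx (EReal.coe_le_coe_iff.2 (by linarith))
  -- separation
  obtain ⟨F, u, hlt, hge⟩ :=
    geometric_hahn_banach_open (hUconv.interior) isOpen_interior hAconv hdisj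
  have hUle : ∀ z ∈ U, F z ≤ u := fun z hz => mr_sep_le_on hUconv hw F hlt hz
  set F₁ : X →L[ℝ] ℝ := F.comp (ContinuousLinearMap.inl ℝ X ℝ) with hF₁def
  set β : ℝ := F (0, 1) with hβdef
  have hF : ∀ (x : X) (t : ℝ), F (x, t) = F₁ x + t * β := by
    intro x t
    have hrep : ((x, t) : X × ℝ) = (x, (0:ℝ)) + t • ((0 : X), (1:ℝ)) := by
      simp [Prod.ext_iff]
    rw [hrep, map_add, map_smul]
    simp [hF₁def, hβdef, smul_eq_mul]
  have hAmem : ∀ (x : X) (t : ℝ),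
      f x ≤ ((fb + p (x - xb) + t : ℝ) : EReal) → u ≤ F₁ x + t * β := by
    intro x t h
    have := hge (x, t) h
    rwa [hF] at this
  have hUmem : ∀ (x : X) (t : ℝ),
      g x < ((gb - t : ℝ) : EReal) → F₁ x + t * β ≤ u := by
    intro x t h
    have := hUle (x, t) h
    rwa [hF] at this
  have hxbA : u ≤ F₁ xb := by
    have := hAmem xb 0 (by rw [hfbe]; exact EReal.coe_le_coe_iff.2 (by simp))
    simpa using this
  have hxbU : ∀ ε : ℝ, 0 < ε → F₁ xb + (-ε) * β ≤ u := by
    intro ε hε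
    refine hUmem xb (-ε) ?_
    rw [hgbe]
    exact EReal.coe_lt_coe_iff.2 (by linarith)
  have hβ0 : 0 ≤ β := by
    by_contra h
    push_neg at h
    have ht' : (0:ℝ) ≤ (u - F₁ xb - 1) / β :=
      (div_pos_of_neg_of_neg (by linarith) h).le
    have hmem := hAmem xb ((u - F₁ xb - 1) / β) (by
      rw [hfbe]
      refine EReal.coe_le_coe_iff.2 ?_
      simp only [sub_self, map_zero]
      linarith)
    have hcancel : (u - F₁ xb - 1) / β * β = u - F₁ xb - 1 := div_mul_cancel₀ _ (ne_of_lt h)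
    rw [hcancel] at hmem
    linarith
  have hxbU' : F₁ xb ≤ u := by
    by_contra h
    push_neg at h
    set ε := (F₁ xb - u) / (β + 1) with hεdef
    have hε : 0 < ε := div_pos (by linarith) (by linarith)
    have h2 := hxbU ε hε
    have hkey : ε * β < F₁ xb - u := by
      rw [hεdef, div_mul_eq_mul_div, div_lt_iff₀ (by linarith : (0:ℝ) < β + 1)]
      nlinarith
    linarith
  have huxb : u = F₁ xb := le_antisymm hxbA hxbU'
  have hβpos : 0 < β := by
    rcases hβ0.lt_or_eq with hlt' | heq
    · exact hlt'
    · exfalso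
      have h2 := hlt _ hw
      rw [hF, ← heq] at h2
      simp at h2
      linarith
  set r : X →L[ℝ] ℝ := β⁻¹ • F₁ with hrdef
  have hr_apply : ∀ v, r v = β⁻¹ * F₁ v := fun v => rfl
  have hrg : r ∈ subdiff g xb := by
    intro x
    by_cases hx : g x = ⊤
    · rw [hx]; exact le_top
    · have hgx : g x = ((g x).toReal : EReal) := (EReal.coe_toReal hx (hgbot x)).symm
      set gx := (g x).toReal with hgxdef
      rw [hgx, hgbe, ← EReal.coe_add, EReal.coe_le_coe_iff]
      refine le_of_forall_pos_le_add ?_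
      intro ε hε
      have hmem := hUmem x (gb - gx - ε) (by
        rw [hgx]
        exact EReal.coe_lt_coe_iff.2 (by linarith))
      rw [huxb] at hmem
      have h3 : (gb - gx - ε) * β ≤ F₁ xb - F₁ x := by linarith
      have key : gb - gx - ε ≤ β⁻¹ * (F₁ xb - F₁ x) := by
        calc gb - gx - ε = β⁻¹ * ((gb - gx - ε) * β) := by
              field_simp
          _ ≤ β⁻¹ * (F₁ xb - F₁ x) :=
              mul_le_mul_of_nonneg_left h3 (inv_nonneg.2 hβ0)
      rw [hr_apply, map_sub]
      linarith
  have hqf : p - r ∈ subdiff f xb := by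
    intro x
    by_cases hx : f x = ⊤
    · rw [hx]; exact le_top
    · have hfx : f x = ((f x).toReal : EReal) := (EReal.coe_toReal hx (hfbot x)).symm
      set fx := (f x).toReal with hfxdef
      rw [hfx, hfbe, ← EReal.coe_add, EReal.coe_le_coe_iff]
      have hmem := hAmem x (fx - fb - p (x - xb)) (by
        rw [hfx]
        exact EReal.coe_le_coe_iff.2 (by linarith))
      rw [huxb] at hmem
      have key : β⁻¹ * (F₁ xb - F₁ x) ≤ fx - fb - p (x - xb) := by
        calc β⁻¹ * (F₁ xb - F₁ x) ≤ β⁻¹ * ((fx - fb - p (x - xb)) * β) :=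
              mul_le_mul_of_nonneg_left (by linarith) (inv_nonneg.2 hβ0)
          _ = fx - fb - p (x - xb) := by field_simp
      have hsplit : β⁻¹ * F₁ (x - xb) = β⁻¹ * F₁ x - β⁻¹ * F₁ xb := by
        rw [map_sub]; ring
      rw [ContinuousLinearMap.sub_apply, hr_apply]
      have hkey2 : β⁻¹ * F₁ xb - β⁻¹ * F₁ x ≤ fx - fb - p (x - xb) := by
        have : β⁻¹ * (F₁ xb - F₁ x) = β⁻¹ * F₁ xb - β⁻¹ * F₁ x := by ring
        linarith [key, this]
      linarith [hsplit, hkey2]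
  exact Set.mem_add.2 ⟨p - r, hqf, r, hrg, by abel⟩


variable {ι : Type*}

lemma mr_sum_ne_bot (φ : ι → X → EReal) (hbot : ∀ i x, φ i x ≠ ⊥) (x : X)
    (s : Finset ι) : ∑ i ∈ s, φ i x ≠ ⊥ := by
  classical
  induction s using Finset.induction_on with
  | empty => simp
  | @insert a s' ha ih =>
      rw [Finset.sum_insert ha]
      intro h
      rcases EReal.add_eq_bot_iff.1 h with h' | h'
      · exact hbot a x h'
      · exact ih h'

lemma mr_sum_ne_top (φ : ι → X → EReal) (x : X) (h : ∀ i, φ i x ≠ ⊤)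
    (s : Finset ι) : ∑ i ∈ s, φ i x ≠ ⊤ := by
  classical
  induction s using Finset.induction_on with
  | empty => simp
  | @insert a s' ha ih =>
      rw [Finset.sum_insert ha]
      exact (EReal.add_lt_top (h a) ih).ne

lemma mr_sum_contAt (φ : ι → X → EReal) (xb : X) (hbot : ∀ i x, φ i x ≠ ⊥)
    (hxb : ∀ i, φ i xb ≠ ⊤) (s : Finset ι)
    (hc : ∀ i ∈ s, ContinuousAt (φ i) xb) :
    ContinuousAt (fun x => ∑ i ∈ s, φ i x) xb := by
  classical
  revert hc
  induction s using Finset.induction_on with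
  | empty =>
      intro _
      simp only [Finset.sum_empty]
      exact continuousAt_const
  | @insert a s' ha ih =>
      intro hc
      have h1 : ContinuousAt (φ a) xb := hc _ (Finset.mem_insert_self _ _)
      have h2 := ih (fun i hi => hc i (Finset.mem_insert_of_mem hi))
      have hadd := EReal.continuousAt_add (p := (φ a xb, ∑ i ∈ s', φ i xb))
        (Or.inl (hxb a)) (Or.inl (hbot a xb))
      have hcomp : ContinuousAt (fun x => φ a x + ∑ i ∈ s', φ i x) xb :=
        ContinuousAt.comp (g := fun q : EReal × EReal => q.1 + q.2) (x := xb) hadd (ContinuousAt.prodMk h1 h2)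
      have hfun : (fun x => ∑ i ∈ insert a s', φ i x)
          = fun x => φ a x + ∑ i ∈ s', φ i x :=
        funext fun x => Finset.sum_insert ha
      rw [hfun]
      exact hcomp

lemma mr_sum_conv (φ : ι → X → EReal) (hbot : ∀ i x, φ i x ≠ ⊥)
    (hconv : ∀ i (x y : X) (t : ℝ), 0 ≤ t → t ≤ 1 →
      φ i (t • x + (1 - t) • y) ≤ (t : EReal) * φ i x + ((1 - t : ℝ) : EReal) * φ i y)
    (s : Finset ι) :
    ∀ (x y : X) (t : ℝ), 0 ≤ t → t ≤ 1 →
      (∑ i ∈ s, φ i (t • x + (1 - t) • y))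
        ≤ (t : EReal) * (∑ i ∈ s, φ i x) + ((1 - t : ℝ) : EReal) * (∑ i ∈ s, φ i y) := by
  classical
  induction s using Finset.induction_on with
  | empty => intro x y t ht0 ht1; simp
  | @insert a s' ha ih =>
      intro x y t ht0 ht1
      rw [Finset.sum_insert ha, Finset.sum_insert ha, Finset.sum_insert ha]
      calc φ a (t • x + (1 - t) • y) + ∑ i ∈ s', φ i (t • x + (1 - t) • y)
          ≤ ((t : EReal) * φ a x + ((1 - t : ℝ) : EReal) * φ a y)
            + ((t : EReal) * (∑ i ∈ s', φ i x) + ((1 - t : ℝ) : EReal) * (∑ i ∈ s', φ i y)) :=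
            add_le_add (hconv a x y t ht0 ht1) (ih x y t ht0 ht1)
        _ = ((t : EReal) * φ a x + (t : EReal) * (∑ i ∈ s', φ i x))
            + (((1 - t : ℝ) : EReal) * φ a y + ((1 - t : ℝ) : EReal) * (∑ i ∈ s', φ i y)) :=
            add_add_add_comm _ _ _ _
        _ = _ := by
            rw [← mr_distrib ht0 (hbot a x) (mr_sum_ne_bot φ hbot x s'),
              ← mr_distrib (by linarith : (0:ℝ) ≤ 1 - t) (hbot a y) (mr_sum_ne_bot φ hbot y s')]

lemma mr_sum_rule (φ : ι → X → EReal) (hbot : ∀ i x, φ i x ≠ ⊥)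
    (hconv : ∀ i (x y : X) (t : ℝ), 0 ≤ t → t ≤ 1 →
      φ i (t • x + (1 - t) • y) ≤ (t : EReal) * φ i x + ((1 - t : ℝ) : EReal) * φ i y)
    (xb : X) (hxb : ∀ i, φ i xb ≠ ⊤) (s : Finset ι)
    (hc : ∀ i ∈ s, ContinuousAt (φ i) xb) :
    subdiff (fun x => ∑ i ∈ s, φ i x) xb = ∑ i ∈ s, subdiff (φ i) xb := by
  classical
  revert hc
  induction s using Finset.induction_on with
  | empty =>
      intro _
      ext q
      simp only [Finset.sum_empty, Set.mem_zero]
      constructor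
      · intro hq
        have h0 : ∀ w : X, q w ≤ 0 := by
          intro w
          have h1 := hq (xb + w)
          simp only [Finset.sum_empty, add_zero, add_sub_cancel_left] at h1
          exact_mod_cast h1
        ext v
        have h2 := h0 (-v)
        rw [map_neg] at h2
        have h3 := h0 v
        simp only [ContinuousLinearMap.zero_apply]
        linarith
      · intro hq
        subst hq
        intro x
        simp
  | @insert a s' ha ih =>
      intro hc
      have hfun : (fun x => ∑ i ∈ insert a s', φ i x)
          = fun x => φ a x + ∑ i ∈ s', φ i x :=
        funext fun x => Finset.sum_insert ha
      rw [hfun, Finset.sum_insert ha,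
        mr_two (φ a) (fun x => ∑ i ∈ s', φ i x) (hbot a)
          (fun x => mr_sum_ne_bot φ hbot x s') (hconv a) (mr_sum_conv φ hbot hconv s')
          xb (hxb a) (mr_sum_ne_top φ xb hxb s')
          (mr_sum_contAt φ xb hbot hxb s' (fun i hi => hc i (Finset.mem_insert_of_mem hi))),
        ih (fun i hi => hc i (Finset.mem_insert_of_mem hi))]

end Aux

/-- Moreau–Rockafellar theorem: subdifferential sum rule for convex functions. -/
theorem stmt_0 {X : Type*} [NormedAddCommGroup X] [NormedSpace ℝ X] [CompleteSpace X]
    (m : ℕ) (φ : Fin m → X → EReal)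
    (hbot : ∀ i x, φ i x ≠ ⊥)
    (hconv : ∀ i (x y : X) (t : ℝ), 0 ≤ t → t ≤ 1 →
      φ i (t • x + (1 - t) • y) ≤ (t : EReal) * φ i x + ((1 - t : ℝ) : EReal) * φ i y)
    (hlsc : ∀ i, LowerSemicontinuous (φ i))
    (xb : X) (hxb : ∀ i, φ i xb ≠ ⊤)
    (hcont : ∃ j : Fin m, ∀ i, i ≠ j → ContinuousAt (φ i) xb) :
    subdiff (fun x => ∑ i, φ i x) xb = ∑ i, subdiff (φ i) xb := by
  classical
  obtain ⟨j, hj⟩ := hcont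
  have hce : ∀ i ∈ Finset.univ.erase j, ContinuousAt (φ i) xb :=
    fun i hi => hj i (Finset.mem_erase.1 hi).1
  have hfun : (fun x : X => ∑ i, φ i x)
      = fun x => φ j x + ∑ i ∈ Finset.univ.erase j, φ i x :=
    funext fun x => (Finset.add_sum_erase _ _ (Finset.mem_univ j)).symm
  rw [hfun,
    mr_two (φ j) (fun x => ∑ i ∈ Finset.univ.erase j, φ i x) (hbot j)
      (fun x => mr_sum_ne_bot φ hbot x _) (hconv j) (mr_sum_conv φ hbot hconv _)
      xb (hxb j) (mr_sum_ne_top φ xb hxb _) (mr_sum_contAt φ xb hbot hxb _ hce),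
    mr_sum_rule φ hbot hconv xb hxb _ hce]
  exact Finset.add_sum_erase Finset.univ (fun i => subdiff (φ i) xb) (Finset.mem_univ j)
end

section
/- Let X be a real Banach space, let F ⊆ X be a nonempty closed bounded convex set, let Ω ⊆ X be a nonempty closed convex set, and let x̄ ∈ Ω. Then the subdifferential of convex analysis of the minimal time function T^F_Ω at x̄ satisfies ∂T^F_Ω(x̄) = N(x̄; Ω) ∩ C*, where C* := {x* ∈ X* : σ_F(−x*) ≤ 1} and σ_F(x*) := sup_{x ∈ F} ⟨x*, x⟩. -/
open scoped Pointwise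

/-- The minimal time function `T^F_Ω(x) := inf{t ≥ 0 : Ω ∩ (x + tF) ≠ ∅}`,
with values in the extended reals (`sInf ∅ = ⊤`). -/
noncomputable def minTime {X : Type*} [AddCommGroup X] [Module ℝ X]
    (F Ω : Set X) (x : X) : EReal :=
  sInf {r : EReal | ∃ t : ℝ, 0 ≤ t ∧ r = (t : EReal) ∧ ∃ f ∈ F, x + t • f ∈ Ω}

/-- The normal cone of convex analysis to `Ω` at `xb`. -/
def normalCone {X : Type*} [NormedAddCommGroup X] [NormedSpace ℝ X]
    (Ω : Set X) (xb : X) : Set (X →L[ℝ] ℝ) :=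
  {p | ∀ x ∈ Ω, p (x - xb) ≤ 0}

lemma minTime_of_mem {X : Type*} [AddCommGroup X] [Module ℝ X]
    {F Ω : Set X} (hF : F.Nonempty) {x : X} (hx : x ∈ Ω) : minTime F Ω x = 0 := by
  obtain ⟨f, hf⟩ := hF
  apply le_antisymm
  · apply sInf_le
    exact ⟨0, le_rfl, by norm_num, f, hf, by simp [hx]⟩
  · apply le_sInf
    rintro r ⟨t, ht, rfl, -⟩
    exact_mod_cast ht

/-- Basic subgradients of convex minimal time functions at in-set points:
`∂T^F_Ω(x̄) = N(x̄; Ω) ∩ C*` where `C* = {x* : σ_F(−x*) ≤ 1}`. -/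
theorem stmt_1 {X : Type*} [NormedAddCommGroup X] [NormedSpace ℝ X] [CompleteSpace X]
    (F Ω : Set X) (hFne : F.Nonempty) (hFcl : IsClosed F)
    (hFbd : Bornology.IsBounded F) (hFconv : Convex ℝ F)
    (hΩne : Ω.Nonempty) (hΩcl : IsClosed Ω) (hΩconv : Convex ℝ Ω)
    (xb : X) (hxb : xb ∈ Ω) :
    subdiff (minTime F Ω) xb =
      normalCone Ω xb ∩ {p : X →L[ℝ] ℝ | sSup ((fun f => -(p f)) '' F) ≤ 1} := by
  have hT0 : minTime F Ω xb = 0 := minTime_of_mem hFne hxb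
  ext p
  simp only [subdiff, normalCone, Set.mem_inter_iff, Set.mem_setOf_eq]
  constructor
  · intro h
    constructor
    · intro x hx
      have hx0 : minTime F Ω x = 0 := minTime_of_mem hFne hx
      have := h x
      rw [hT0, hx0, add_zero] at this
      exact_mod_cast this
    · apply Real.sSup_le _ zero_le_one
      rintro y ⟨f, hf, rfl⟩
      have hle : minTime F Ω (xb - f) ≤ ((1 : ℝ) : EReal) := by
        apply sInf_le
        exact ⟨1, zero_le_one, rfl, f, hf, by simp [hxb]⟩
      have := (h (xb - f)).trans hle
      rw [hT0, add_zero] at this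
      have hco : p ((xb - f) - xb) ≤ (1 : ℝ) := by exact_mod_cast this
      have : (xb - f) - xb = -f := by abel
      rw [this, map_neg] at hco
      exact hco
  · rintro ⟨hN, hS⟩
    obtain ⟨C, hC⟩ := isBounded_iff_forall_norm_le.mp hFbd
    have hbdd : BddAbove ((fun f => -(p f)) '' F) := by
      refine ⟨‖p‖ * C, ?_⟩
      rintro y ⟨f, hf, rfl⟩
      calc -(p f) ≤ |p f| := neg_le_abs _
        _ = ‖p f‖ := rfl
        _ ≤ ‖p‖ * ‖f‖ := p.le_opNorm f
        _ ≤ ‖p‖ * C := by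
            exact mul_le_mul_of_nonneg_left (hC f hf) (norm_nonneg p)
    have key : ∀ f ∈ F, -(p f) ≤ 1 := fun f hf =>
      (le_csSup hbdd ⟨f, hf, rfl⟩).trans hS
    intro x
    rw [hT0, add_zero]
    apply le_sInf
    rintro r ⟨t, ht, rfl, f, hf, hmem⟩
    have h1 : p (x + t • f - xb) ≤ 0 := hN _ hmem
    have heq : p (x - xb) = p (x + t • f - xb) - t * p f := by
      have hx : x - xb = (x + t • f - xb) - t • f := by abel
      rw [hx, map_sub, map_smul, smul_eq_mul]
    have h2 : -(t * p f) ≤ t := by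
      calc -(t * p f) = t * (-(p f)) := by ring
        _ ≤ t * 1 := mul_le_mul_of_nonneg_left (key f hf) ht
        _ = t := mul_one t
    have : p (x - xb) ≤ t := by rw [heq]; linarith
    exact_mod_cast this
end

section
/- Let X be a real Banach space, let F ⊆ X be a nonempty closed bounded convex set, and let Ω ⊆ X be a nonempty closed convex set. Let x̄ ∉ Ω be such that Π^F_Ω(x̄) ≠ ∅ and r := T^F_Ω(x̄) < ∞, and set Ω_r := {x ∈ X : T^F_Ω(x) ≤ r}. Then for every w̄ ∈ Π^F_Ω(x̄), the subdifferential of convex analysis satisfies ∂T^F_Ω(x̄) = N(x̄; Ω_r) ∩ (−∂ρ_F(w̄ − x̄)), and this set is contained in N(w̄; Ω) ∩ (−∂ρ_F(w̄ − x̄)). -/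
open scoped Pointwise

/-- The Minkowski gauge `ρ_F(x) := inf{t ≥ 0 : x ∈ tF}`, with values in the
extended reals (`sInf ∅ = ⊤`). -/
noncomputable def gaugeE {X : Type*} [AddCommGroup X] [Module ℝ X]
    (F : Set X) (x : X) : EReal :=
  sInf {r : EReal | ∃ t : ℝ, 0 ≤ t ∧ r = (t : EReal) ∧ ∃ f ∈ F, x = t • f}

/-- The generalized projection `Π^F_Ω(x) := (x + T^F_Ω(x)·F) ∩ Ω`. -/
noncomputable def genProj {X : Type*} [AddCommGroup X] [Module ℝ X]
    (F Ω : Set X) (x : X) : Set X :=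
  {w | w ∈ Ω ∧ ∃ f ∈ F, w = x + (minTime F Ω x).toReal • f}

/-- Subgradients of convex minimal time functions at out-of-set points:
for every `w̄ ∈ Π^F_Ω(x̄)`,
`∂T^F_Ω(x̄) = N(x̄; Ω_r) ∩ (−∂ρ_F(w̄ − x̄)) ⊆ N(w̄; Ω) ∩ (−∂ρ_F(w̄ − x̄))`,
where `Ω_r = {x : T^F_Ω(x) ≤ r}` with `r = T^F_Ω(x̄)`. -/
theorem stmt_2 {X : Type*} [NormedAddCommGroup X] [NormedSpace ℝ X] [CompleteSpace X]
    (F Ω : Set X) (hFne : F.Nonempty) (hFcl : IsClosed F)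
    (hFbd : Bornology.IsBounded F) (hFconv : Convex ℝ F)
    (hΩne : Ω.Nonempty) (hΩcl : IsClosed Ω) (hΩconv : Convex ℝ Ω)
    (xb : X) (hxb : xb ∉ Ω) (hproj : (genProj F Ω xb).Nonempty)
    (hfin : minTime F Ω xb ≠ ⊤) :
    ∀ wb ∈ genProj F Ω xb,
      subdiff (minTime F Ω) xb =
        normalCone {x | minTime F Ω x ≤ minTime F Ω xb} xb ∩
          (-(subdiff (gaugeE F) (wb - xb))) ∧
      subdiff (minTime F Ω) xb ⊆
        normalCone Ω wb ∩ (-(subdiff (gaugeE F) (wb - xb))) := by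
  rintro wb ⟨hwbΩ, f, hfF, hwbeq⟩
  set r : ℝ := (minTime F Ω xb).toReal with hrdef
  -- basic bounds
  have hTle : ∀ (x : X) (t : ℝ), 0 ≤ t → (∃ g ∈ F, x + t • g ∈ Ω) →
      minTime F Ω x ≤ (t : EReal) := by
    intro x t ht hg
    exact sInf_le ⟨t, ht, rfl, hg⟩
  have hgle : ∀ (u : X) (t : ℝ), 0 ≤ t → (∃ g ∈ F, u = t • g) →
      gaugeE F u ≤ (t : EReal) := by
    intro u t ht hg
    exact sInf_le ⟨t, ht, rfl, hg⟩
  have hTnn : ∀ x : X, (0 : EReal) ≤ minTime F Ω x := by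
    intro x
    refine le_sInf ?_
    rintro e ⟨t, ht, rfl, -⟩
    exact_mod_cast ht
  have hTbot : minTime F Ω xb ≠ ⊥ := by
    intro h
    have := hTnn xb
    rw [h] at this
    simp at this
  have hr : (r : EReal) = minTime F Ω xb := EReal.coe_toReal hfin hTbot
  have hrnn : 0 ≤ r := by
    have := hTnn xb
    rw [← hr] at this
    exact_mod_cast this
  have hwx : wb - xb = r • f := by rw [hwbeq]; abel
  -- gauge value at wb - xb
  have hgval : gaugeE F (wb - xb) = (r : EReal) := by
    refine le_antisymm (hgle _ r hrnn ⟨f, hfF, hwx⟩) (le_sInf ?_)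
    rintro e ⟨t, ht, rfl, g, hgF, he⟩
    exact le_trans (le_of_eq hr) (hTle xb t ht ⟨g, hgF, by rw [← he]; simpa using hwbΩ⟩)
  -- (A): subdiff T ⊆ normal cone to sublevel set
  have hA : ∀ p ∈ subdiff (minTime F Ω) xb,
      p ∈ normalCone {x | minTime F Ω x ≤ minTime F Ω xb} xb := by
    intro p hp x hx
    have h2 : ((p (x - xb) : ℝ) : EReal) + minTime F Ω xb ≤ minTime F Ω xb :=
      (hp x).trans hx
    rw [← hr, ← EReal.coe_add] at h2
    have : p (x - xb) + r ≤ r := by exact_mod_cast h2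
    linarith
  -- (B): subdiff T ⊆ -(subdiff gauge)
  have hB : ∀ p ∈ subdiff (minTime F Ω) xb, -p ∈ subdiff (gaugeE F) (wb - xb) := by
    intro p hp u
    rw [hgval]
    refine le_sInf ?_
    rintro e ⟨t, ht, rfl, g, hgF, he⟩
    have h1 : minTime F Ω (wb - u) ≤ (t : EReal) :=
      hTle _ t ht ⟨g, hgF, by rw [← he]; simpa using hwbΩ⟩
    have h2 := (hp (wb - u)).trans h1
    rw [← hr, ← EReal.coe_add] at h2
    have h3 : p (wb - u - xb) + r ≤ t := by exact_mod_cast h2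
    have heq : (-p) (u - (wb - xb)) = p (wb - u - xb) := by
      simp only [ContinuousLinearMap.neg_apply, map_sub]
      ring
    rw [heq, ← EReal.coe_add]
    exact_mod_cast h3
  -- value of p (wb - xb) given -p ∈ subdiff gauge
  have hpwb : ∀ p : X →L[ℝ] ℝ, -p ∈ subdiff (gaugeE F) (wb - xb) →
      p (wb - xb) = -r := by
    intro p hg
    have hge0 : gaugeE F 0 ≤ ((0 : ℝ) : EReal) :=
      hgle 0 0 le_rfl ⟨f, hfF, by simp⟩
    have h1 := (hg 0).trans hge0
    rw [hgval, ← EReal.coe_add] at h1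
    have h1' : (-p) (0 - (wb - xb)) + r ≤ 0 := by exact_mod_cast h1
    have h1'' : p (wb - xb) + r ≤ 0 := by
      simpa [ContinuousLinearMap.neg_apply] using h1'
    have hg2 : gaugeE F ((2 * r) • f) ≤ ((2 * r : ℝ) : EReal) :=
      hgle _ (2 * r) (by linarith) ⟨f, hfF, rfl⟩
    have h2 := (hg ((2 * r) • f)).trans hg2
    rw [hgval, ← EReal.coe_add] at h2
    have h2' : (-p) ((2 * r) • f - (wb - xb)) + r ≤ 2 * r := by exact_mod_cast h2
    have heq : (2 * r) • f - (wb - xb) = wb - xb := by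
      rw [hwx, ← sub_smul]; congr 1; ring
    rw [heq] at h2'
    have h2'' : -p (wb - xb) + r ≤ 2 * r := by
      simpa [ContinuousLinearMap.neg_apply] using h2'
    linarith
  -- (C): reverse inclusion
  have hC : ∀ p : X →L[ℝ] ℝ,
      p ∈ normalCone {x | minTime F Ω x ≤ minTime F Ω xb} xb →
      -p ∈ subdiff (gaugeE F) (wb - xb) → p ∈ subdiff (minTime F Ω) xb := by
    intro p hN hg x
    have hpw : p (wb - xb) = -r := hpwb p hg
    rw [← hr]
    show _ ≤ sInf _
    refine le_sInf ?_
    rintro e ⟨t, ht, rfl, g, hgF, hmem⟩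
    -- -p g ≤ 1
    have hgau : gaugeE F g ≤ ((1 : ℝ) : EReal) :=
      hgle g 1 one_pos.le ⟨g, hgF, (one_smul ℝ g).symm⟩
    have h2 := (hg g).trans hgau
    rw [hgval, ← EReal.coe_add] at h2
    have h2' : (-p) (g - (wb - xb)) + r ≤ 1 := by exact_mod_cast h2
    have hpg : -p g ≤ 1 := by
      have : (-p) (g - (wb - xb)) = -p g + p (wb - xb) := by
        simp [ContinuousLinearMap.neg_apply, map_sub]; ring
      rw [this, hpw] at h2'
      linarith
    -- v := x + t • g - r • f is in the sublevel set
    have hv : minTime F Ω (x + t • g - r • f) ≤ minTime F Ω xb := by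
      rw [← hr]
      exact hTle _ r hrnn ⟨f, hfF, by simpa using hmem⟩
    have h1 : p (x + t • g - r • f - xb) ≤ 0 := hN _ hv
    have hexp : p (x + t • g - r • f - xb) = p (x - xb) + t * p g - p (wb - xb) := by
      rw [hwx]
      have : x + t • g - r • f - xb = (x - xb) + t • g - r • f := by abel
      rw [this, map_sub, map_add, map_smul]
      simp [smul_eq_mul]
    rw [hexp, hpw] at h1
    have hfin' : p (x - xb) + r ≤ t := by nlinarith [mul_nonneg ht (by linarith : (0:ℝ) ≤ 1 + p g)]
    rw [← EReal.coe_add]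
    exact_mod_cast hfin'
  -- (D): subdiff T ⊆ normal cone to Ω at wb
  have hD : ∀ p ∈ subdiff (minTime F Ω) xb, p ∈ normalCone Ω wb := by
    intro p hp w hw
    have h1 : minTime F Ω w ≤ ((0 : ℝ) : EReal) :=
      hTle w 0 le_rfl ⟨f, hfF, by simpa using hw⟩
    have h2 := (hp w).trans h1
    rw [← hr, ← EReal.coe_add] at h2
    have h3 : p (w - xb) + r ≤ 0 := by exact_mod_cast h2
    have h4 : p (wb - xb) = -r := hpwb p (hB p hp)
    have : p (w - wb) = p (w - xb) - p (wb - xb) := by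
      rw [map_sub, map_sub, map_sub]; ring
    rw [this, h4]
    linarith
  constructor
  · ext p
    constructor
    · intro hp
      exact ⟨hA p hp, Set.mem_neg.mpr (by simpa using hB p hp)⟩
    · rintro ⟨hN, hg⟩
      exact hC p hN (Set.mem_neg.mp hg)
  · intro p hp
    exact ⟨hD p hp, Set.mem_neg.mpr (by simpa using hB p hp)⟩
end

section
/- Let X be a real Banach space, let F ⊆ X be a nonempty closed bounded convex set with 0 ∈ F, and let Ω ⊆ X be a nonempty closed convex set. Let x̄ ∉ Ω be such that Π^F_Ω(x̄) ≠ ∅ and T^F_Ω(x̄) < ∞. Then for every w̄ ∈ Π^F_Ω(x̄), the subdifferential of convex analysis satisfies ∂T^F_Ω(x̄) = N(w̄; Ω) ∩ (−∂ρ_F(w̄ − x̄)). -/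
open scoped Pointwise

section Aux

variable {X : Type*} [AddCommGroup X] [Module ℝ X]

lemma minTime_nonneg (F Ω : Set X) (x : X) : 0 ≤ minTime F Ω x := by
  refine le_sInf ?_
  rintro r ⟨t, ht, rfl, -⟩
  exact_mod_cast ht

lemma minTime_le (F Ω : Set X) (x : X) {t : ℝ} {f : X} (ht : 0 ≤ t) (hf : f ∈ F)
    (h : x + t • f ∈ Ω) : minTime F Ω x ≤ (t : EReal) :=
  sInf_le ⟨t, ht, rfl, f, hf, h⟩

lemma le_minTime (F Ω : Set X) (x : X) {c : EReal}
    (h : ∀ t : ℝ, ∀ f : X, 0 ≤ t → f ∈ F → x + t • f ∈ Ω → c ≤ (t : EReal)) :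
    c ≤ minTime F Ω x := by
  refine le_sInf ?_
  rintro r ⟨t, ht, rfl, f, hf, hx⟩
  exact h t f ht hf hx

lemma gaugeE_nonneg (F : Set X) (x : X) : 0 ≤ gaugeE F x := by
  refine le_sInf ?_
  rintro r ⟨t, ht, rfl, -⟩
  exact_mod_cast ht

lemma gaugeE_le (F : Set X) (x : X) {t : ℝ} {f : X} (ht : 0 ≤ t) (hf : f ∈ F)
    (h : x = t • f) : gaugeE F x ≤ (t : EReal) :=
  sInf_le ⟨t, ht, rfl, f, hf, h⟩

lemma le_gaugeE (F : Set X) (x : X) {c : EReal}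
    (h : ∀ t : ℝ, ∀ f : X, 0 ≤ t → f ∈ F → x = t • f → c ≤ (t : EReal)) :
    c ≤ gaugeE F x := by
  refine le_sInf ?_
  rintro r ⟨t, ht, rfl, f, hf, hx⟩
  exact h t f ht hf hx

end Aux

/-- Subgradients of convex minimal time functions at out-of-set points when `0 ∈ F`:
for every `w̄ ∈ Π^F_Ω(x̄)`, `∂T^F_Ω(x̄) = N(w̄; Ω) ∩ (−∂ρ_F(w̄ − x̄))`. -/
theorem stmt_3 {X : Type*} [NormedAddCommGroup X] [NormedSpace ℝ X] [CompleteSpace X]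
    (F Ω : Set X) (hFne : F.Nonempty) (hFcl : IsClosed F)
    (hFbd : Bornology.IsBounded F) (hFconv : Convex ℝ F)
    (hΩne : Ω.Nonempty) (hΩcl : IsClosed Ω) (hΩconv : Convex ℝ Ω)
    (h0F : (0 : X) ∈ F)
    (xb : X) (hxb : xb ∉ Ω) (hproj : (genProj F Ω xb).Nonempty)
    (hfin : minTime F Ω xb ≠ ⊤) :
    ∀ wb ∈ genProj F Ω xb,
      subdiff (minTime F Ω) xb =
        normalCone Ω wb ∩ (-(subdiff (gaugeE F) (wb - xb))) := by
  rintro wb ⟨hwbΩ, f₀, hf₀, hwbeq⟩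
  set tb : ℝ := (minTime F Ω xb).toReal with htbdef
  have hTnn : 0 ≤ minTime F Ω xb := minTime_nonneg F Ω xb
  have hTbot : minTime F Ω xb ≠ ⊥ := by
    intro h; rw [h] at hTnn; exact absurd hTnn (by simp)
  have hTco : minTime F Ω xb = (tb : EReal) := (EReal.coe_toReal hfin hTbot).symm
  have htb0 : 0 ≤ tb := by
    rw [hTco] at hTnn; exact_mod_cast hTnn
  have hv : wb - xb = tb • f₀ := by rw [hwbeq]; abel
  -- minimal time vanishes on Ω
  have hT0 : ∀ x ∈ Ω, minTime F Ω x = 0 := by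
    intro x hx
    refine le_antisymm ?_ (minTime_nonneg F Ω x)
    have := minTime_le F Ω x (t := 0) (f := 0) le_rfl h0F (by simpa using hx)
    simpa using this
  -- gauge of the displacement equals tb
  have hρv : gaugeE F (wb - xb) = (tb : EReal) := by
    refine le_antisymm (gaugeE_le F _ htb0 hf₀ hv) ?_
    refine le_gaugeE F _ ?_
    intro t f ht hf hrep
    have : minTime F Ω xb ≤ (t : EReal) := by
      refine minTime_le F Ω xb ht hf ?_
      have : xb + t • f = wb := by
        have := hrep; rw [sub_eq_iff_eq_add] at this
        rw [this]; abel
      rw [this]; exact hwbΩ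
    rw [hTco] at this; exact this
  have hρ0 : gaugeE F (0 : X) = 0 := by
    refine le_antisymm ?_ (gaugeE_nonneg F 0)
    have := gaugeE_le F (0 : X) (t := 0) (f := 0) le_rfl h0F (by simp)
    simpa using this
  ext p
  constructor
  · -- forward inclusion
    intro hp
    have hp' : ∀ x : X, ((p (x - xb) : ℝ) : EReal) + (tb : EReal) ≤ minTime F Ω x := by
      intro x; rw [← hTco]; exact hp x
    -- p (wb - xb) = - tb
    have key1 : p (wb - xb) ≤ -tb := by
      have h1 := hp' wb
      rw [hT0 wb hwbΩ, ← EReal.coe_add] at h1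
      have : p (wb - xb) + tb ≤ (0 : ℝ) := by exact_mod_cast h1
      linarith
    have key2 : -tb ≤ p (wb - xb) := by
      have hmem : (xb - tb • f₀) + (2 * tb) • f₀ ∈ Ω := by
        have : (xb - tb • f₀) + (2 * tb) • f₀ = xb + tb • f₀ := by
          rw [two_mul, add_smul]; abel
        rw [this, ← hwbeq]; exact hwbΩ
      have h2 := (hp' (xb - tb • f₀)).trans
        (minTime_le F Ω _ (by linarith) hf₀ hmem)
      rw [← EReal.coe_add] at h2
      have h3 : p ((xb - tb • f₀) - xb) + tb ≤ 2 * tb := by exact_mod_cast h2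
      have h4 : (xb - tb • f₀) - xb = -(wb - xb) := by rw [hv]; abel
      rw [h4, map_neg] at h3
      linarith
    have key : p (wb - xb) = -tb := le_antisymm key1 key2
    constructor
    · -- normal cone
      intro x hx
      have h1 := hp' x
      rw [hT0 x hx, ← EReal.coe_add] at h1
      have h2 : p (x - xb) + tb ≤ (0 : ℝ) := by exact_mod_cast h1
      have h3 : x - wb = (x - xb) - (wb - xb) := by abel
      rw [h3, map_sub, key]
      linarith
    · -- negative subdifferential of gauge
      rw [Set.mem_neg]
      intro u
      rw [hρv]
      refine le_gaugeE F u ?_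
      intro t f ht hf hrep
      have hmem : (wb - u) + t • f ∈ Ω := by
        have : (wb - u) + t • f = wb := by rw [hrep]; abel
        rw [this]; exact hwbΩ
      have h2 := (hp' (wb - u)).trans (minTime_le F Ω _ ht hf hmem)
      rw [← EReal.coe_add] at h2
      have h3 : p ((wb - u) - xb) + tb ≤ t := by exact_mod_cast h2
      have h4 : (wb - u) - xb = (wb - xb) - u := by abel
      rw [h4, map_sub, key] at h3
      have h5 : (-p) (u - (wb - xb)) + tb ≤ t := by
        rw [ContinuousLinearMap.neg_apply, map_sub, key]
        linarith
      rw [← EReal.coe_add]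
      exact_mod_cast h5
  · -- reverse inclusion
    rintro ⟨hN, hneg⟩
    rw [Set.mem_neg] at hneg
    have hsub : ∀ u : X, (((-p) (u - (wb - xb)) : ℝ) : EReal) + (tb : EReal) ≤ gaugeE F u := by
      intro u; rw [← hρv]; exact hneg u
    -- p (wb - xb) = -tb
    have keyA : p (wb - xb) ≤ -tb := by
      have h1 := hsub 0
      rw [hρ0, ← EReal.coe_add] at h1
      have h2 : (-p) (0 - (wb - xb)) + tb ≤ (0 : ℝ) := by exact_mod_cast h1
      rw [ContinuousLinearMap.neg_apply, zero_sub, map_neg, neg_neg] at h2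
      linarith
    have keyB : -tb ≤ p (wb - xb) := by
      have hle : gaugeE F ((wb - xb) + (wb - xb)) ≤ ((tb + tb : ℝ) : EReal) := by
        refine gaugeE_le F _ (by linarith) hf₀ ?_
        rw [hv, ← add_smul]
      have h1 := (hsub ((wb - xb) + (wb - xb))).trans hle
      rw [← EReal.coe_add] at h1
      have h2 : (-p) (((wb - xb) + (wb - xb)) - (wb - xb)) + tb ≤ tb + tb := by
        exact_mod_cast h1
      rw [ContinuousLinearMap.neg_apply] at h2
      have h3 : ((wb - xb) + (wb - xb)) - (wb - xb) = wb - xb := by abel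
      rw [h3] at h2
      linarith
    have key : p (wb - xb) = -tb := le_antisymm keyA keyB
    -- show p ∈ ∂ minTime at xb
    intro x
    rw [hTco]
    refine le_minTime F Ω x ?_
    intro t f ht hf hx
    have hNw : p ((x + t • f) - wb) ≤ 0 := hN _ hx
    have hgf : gaugeE F (t • f) ≤ (t : EReal) := gaugeE_le F _ ht hf rfl
    have h1 := (hsub (t • f)).trans hgf
    rw [← EReal.coe_add] at h1
    have h2 : (-p) (t • f - (wb - xb)) + tb ≤ t := by exact_mod_cast h1
    rw [ContinuousLinearMap.neg_apply, map_sub, key] at h2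
    have h3 : x - xb = ((x + t • f) - wb) + (wb - xb) - t • f := by abel
    have h4 : p (x - xb) = p ((x + t • f) - wb) + p (wb - xb) - p (t • f) := by
      rw [h3, map_sub, map_add]
    rw [key] at h4
    have h5 : p (x - xb) + tb ≤ t := by
      rw [h4]; linarith
    rw [← EReal.coe_add]
    exact_mod_cast h5
end

section
/- Let n = 2k + 1 and let Ω_i = [a_i, b_i] ⊂ ℝ, i = 1, …, n, be closed intervals with a_1 ≤ b_1 < a_2 ≤ b_2 < … < a_n ≤ b_n. Then a point x̄ ∈ ℝ minimizes D(x) := Σ_{i=1}^n d(x; [a_i, b_i]) over ℝ if and only if x̄ ∈ [a_{k+1}, b_{k+1}] (the middle interval). -/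
lemma infDist_Icc_real (a b x : ℝ) (h : a ≤ b) :
    Metric.infDist x (Set.Icc a b) = (|x - a| + |x - b| - (b - a)) / 2 := by
  rcases le_total x a with hxa | hax
  · have h1 : Metric.infDist x (Set.Icc a b) ≤ a - x := by
      have := Metric.infDist_le_dist_of_mem (x := x) (y := a)
        (Set.mem_Icc.mpr ⟨le_refl a, h⟩)
      rw [Real.dist_eq, abs_of_nonpos (by linarith : x - a ≤ 0)] at this
      linarith
    have h2 : a - x ≤ Metric.infDist x (Set.Icc a b) := by
      by_contra hc
      push_neg at hc
      obtain ⟨y, hy, hd⟩ := (Metric.infDist_lt_iff ⟨a, Set.mem_Icc.mpr ⟨le_refl a, h⟩⟩).mp hc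
      rw [Real.dist_eq] at hd
      have : a - x ≤ |x - y| := by
        rw [abs_sub_comm]
        calc a - x ≤ y - x := by linarith [hy.1]
        _ ≤ |y - x| := le_abs_self _
      linarith
    rw [le_antisymm h1 h2, abs_of_nonpos (by linarith : x - a ≤ 0),
      abs_of_nonpos (by linarith : x - b ≤ 0)]
    ring
  · rcases le_total x b with hxb | hbx
    · rw [Metric.infDist_zero_of_mem (Set.mem_Icc.mpr ⟨hax, hxb⟩),
        abs_of_nonneg (by linarith : (0:ℝ) ≤ x - a),
        abs_of_nonpos (by linarith : x - b ≤ 0)]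
      ring
    · have h1 : Metric.infDist x (Set.Icc a b) ≤ x - b := by
        have := Metric.infDist_le_dist_of_mem (x := x) (y := b)
          (Set.mem_Icc.mpr ⟨h, le_refl b⟩)
        rwa [Real.dist_eq, abs_of_nonneg (by linarith)] at this
      have h2 : x - b ≤ Metric.infDist x (Set.Icc a b) := by
        by_contra hc
        push_neg at hc
        obtain ⟨y, hy, hd⟩ := (Metric.infDist_lt_iff ⟨a, Set.mem_Icc.mpr ⟨le_refl a, h⟩⟩).mp hc
        rw [Real.dist_eq] at hd
        have : x - b ≤ |x - y| := by
          calc x - b ≤ x - y := by linarith [hy.2]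
          _ ≤ |x - y| := le_abs_self _
        linarith
      rw [le_antisymm h1 h2, abs_of_nonneg (by linarith : (0:ℝ) ≤ x - a),
        abs_of_nonneg (by linarith : (0:ℝ) ≤ x - b)]
      ring

lemma abs_pair_le (u v x : ℝ) : |u - v| ≤ |x - u| + |x - v| := by
  have : u - v = -(x - u) + (x - v) := by ring
  rw [this]
  calc |(-(x-u)) + (x - v)| ≤ |(-(x-u))| + |x - v| := abs_add_le _ _
  _ = |x - u| + |x - v| := by rw [abs_neg]

lemma abs_pair_eq (u v x : ℝ) (h1 : u ≤ x) (h2 : x ≤ v) :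
    |x - u| + |x - v| = |u - v| := by
  rw [abs_of_nonneg (by linarith : (0:ℝ) ≤ x - u),
    abs_of_nonpos (by linarith : x - v ≤ 0),
    abs_of_nonpos (by linarith : u - v ≤ 0)]
  ring

/-- Fermat–Torricelli problem for an odd number `n = 2k + 1` of disjoint closed
intervals `[a_i, b_i]`, `i = 1, …, n`, on the real line: `x̄` minimizes
`D(x) = Σ_{i=1}^n d(x; [a_i, b_i])` if and only if `x̄` belongs to the middle
interval `[a_{k+1}, b_{k+1}]`. -/
theorem stmt_8 (k n : ℕ) (hn : n = 2 * k + 1) (a b : ℕ → ℝ)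
    (hab : ∀ i, 1 ≤ i → i ≤ n → a i ≤ b i)
    (hsep : ∀ i, 1 ≤ i → i < n → b i < a (i + 1))
    (xb : ℝ) :
    (∀ x : ℝ, (∑ i ∈ Finset.Icc 1 n, Metric.infDist xb (Set.Icc (a i) (b i))) ≤
        ∑ i ∈ Finset.Icc 1 n, Metric.infDist x (Set.Icc (a i) (b i))) ↔
      xb ∈ Set.Icc (a (k + 1)) (b (k + 1)) := by
  set S := Finset.Icc 1 n with hS
  -- chain: b i < a j for 1 ≤ i < j ≤ n
  have hchain : ∀ i j, 1 ≤ i → i < j → j ≤ n → b i < a j := by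
    intro i j hi hij hj
    induction j with
    | zero => omega
    | succ m ih =>
      rcases Nat.lt_or_ge i m with hm | hm
      · have h1 : b i < a m := ih (by omega) (by omega)
        have h2 : a m ≤ b m := hab m (by omega) (by omega)
        have h3 : b m < a (m + 1) := hsep m (by omega) (by omega)
        linarith
      · have : i = m := by omega
        subst this
        exact hsep i hi (by omega)
  have hkn : k + 1 ≤ n := by omega
  have hmid : a (k + 1) ≤ b (k + 1) := hab (k + 1) (by omega) hkn
  -- rewrite each infDist
  have hrw : ∀ x : ℝ, (∑ i ∈ S, Metric.infDist x (Set.Icc (a i) (b i))) =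
      ((∑ i ∈ S, (|x - a i| + |x - b i|)) - ∑ i ∈ S, (b i - a i)) / 2 := by
    intro x
    rw [← Finset.sum_sub_distrib, Finset.sum_div]
    refine Finset.sum_congr rfl fun i hi => ?_
    rw [Finset.mem_Icc] at hi
    rw [infDist_Icc_real _ _ _ (hab i hi.1 hi.2)]
  -- reindex the b-part
  have hre : ∀ x : ℝ, (∑ i ∈ S, (|x - a i| + |x - b i|)) =
      ∑ i ∈ S, (|x - a i| + |x - b (n + 1 - i)|) := by
    intro x
    rw [Finset.sum_add_distrib, Finset.sum_add_distrib]
    congr 1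
    refine Finset.sum_nbij' (fun i => n + 1 - i) (fun i => n + 1 - i) ?_ ?_ ?_ ?_ ?_
    · intro i hi; simp only [hS, Finset.mem_Icc] at hi ⊢; omega
    · intro i hi; simp only [hS, Finset.mem_Icc] at hi ⊢; omega
    · intro i hi; simp only [hS, Finset.mem_Icc] at hi; omega
    · intro i hi; simp only [hS, Finset.mem_Icc] at hi; omega
    · intro i hi
      simp only [hS, Finset.mem_Icc] at hi
      have h2 : n + 1 - (n + 1 - i) = i := by omega
      rw [h2]
  -- paired term equality on the middle interval
  have hpair_eq : ∀ x : ℝ, x ∈ Set.Icc (a (k+1)) (b (k+1)) → ∀ i ∈ S,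
      |x - a i| + |x - b (n + 1 - i)| = |a i - b (n + 1 - i)| := by
    intro x hx i hi
    rw [hS, Finset.mem_Icc] at hi
    obtain ⟨hx1, hx2⟩ := hx
    rcases Nat.lt_trichotomy i (k + 1) with hik | hik | hik
    · -- i ≤ k, so a i ≤ x and x ≤ b (n+1-i) with n+1-i ≥ k+2
      have h1 : a i ≤ x := by
        have := hab i hi.1 (by omega)
        have := hchain i (k+1) hi.1 hik (by omega)
        linarith
      have h2 : x ≤ b (n + 1 - i) := by
        have hj : k + 1 < n + 1 - i := by omega
        have h3 : b (k+1) < a (n + 1 - i) := hchain (k+1) (n+1-i) (by omega) hj (by omega)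
        have h4 : a (n+1-i) ≤ b (n+1-i) := hab _ (by omega) (by omega)
        linarith
      exact abs_pair_eq _ _ _ h1 h2
    · subst hik
      have : n + 1 - (k + 1) = k + 1 := by omega
      rw [this]
      exact abs_pair_eq _ _ _ hx1 hx2
    · -- i ≥ k+2, so b (n+1-i) ≤ x ≤ a i
      have h1 : b (n + 1 - i) ≤ x := by
        have hj : n + 1 - i < k + 1 := by omega
        have h3 : b (n+1-i) < a (k+1) := hchain (n+1-i) (k+1) (by omega) hj (by omega)
        linarith
      have h2 : x ≤ a i := by
        have h3 : b (k+1) < a i := hchain (k+1) i (by omega) hik hi.2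
        linarith
      rw [abs_sub_comm (a i) (b (n+1-i)), ← abs_pair_eq _ _ _ h1 h2]
      ring
  -- main function
  set F : ℝ → ℝ := fun x => ∑ i ∈ S, (|x - a i| + |x - b (n + 1 - i)|) with hF
  have hFmin : ∀ x : ℝ, (∑ i ∈ S, |a i - b (n + 1 - i)|) ≤ F x := by
    intro x
    exact Finset.sum_le_sum fun i _ => abs_pair_le _ _ _
  have hFeq : ∀ x ∈ Set.Icc (a (k+1)) (b (k+1)),
      F x = ∑ i ∈ S, |a i - b (n + 1 - i)| := by
    intro x hx
    exact Finset.sum_congr rfl (hpair_eq x hx)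
  have hiff : ∀ x : ℝ, (∑ i ∈ S, Metric.infDist xb (Set.Icc (a i) (b i))) ≤
      (∑ i ∈ S, Metric.infDist x (Set.Icc (a i) (b i))) ↔ F xb ≤ F x := by
    intro x
    rw [hrw, hrw]
    simp only [hF]
    rw [← hre xb, ← hre x]
    constructor <;> intro h <;> linarith
  constructor
  · intro h
    by_contra hout
    have hmem : a (k+1) ∈ Set.Icc (a (k+1)) (b (k+1)) := Set.mem_Icc.mpr ⟨le_refl _, hmid⟩
    have h1 : F xb ≤ F (a (k+1)) := (hiff (a (k+1))).mp (h (a (k+1)))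
    rw [hFeq _ hmem] at h1
    -- strict lower bound on F xb
    have hk1S : (k+1) ∈ S := by rw [hS, Finset.mem_Icc]; omega
    have hstrict : (∑ i ∈ S, |a i - b (n + 1 - i)|) < F xb := by
      apply Finset.sum_lt_sum (fun i _ => abs_pair_le _ _ _)
      refine ⟨k+1, hk1S, ?_⟩
      have hnk : n + 1 - (k + 1) = k + 1 := by omega
      rw [hnk]
      rw [Set.mem_Icc] at hout
      push_neg at hout
      rcases lt_or_ge xb (a (k+1)) with hlt | hge
      · rw [abs_of_nonpos (by linarith : a (k+1) - b (k+1) ≤ 0),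
          abs_of_nonpos (by linarith : xb - a (k+1) ≤ 0),
          abs_of_nonpos (by linarith : xb - b (k+1) ≤ 0)]
        linarith
      · have hgt : b (k+1) < xb := hout hge
        rw [abs_of_nonpos (by linarith : a (k+1) - b (k+1) ≤ 0),
          abs_of_nonneg (by linarith : (0:ℝ) ≤ xb - a (k+1)),
          abs_of_nonneg (by linarith : (0:ℝ) ≤ xb - b (k+1))]
        linarith
    linarith
  · intro hx x
    rw [hiff x, hFeq xb hx]
    exact hFmin x
end

section
/- Let X be a real Hilbert space and let Ω_1, Ω_2, Ω_3 ⊆ X be pairwise disjoint nonempty closed convex sets. For x̄ ∈ X and each i with x̄ ∉ Ω_i set a_i := (x̄ − P_{Ω_i}(x̄)) / d(x̄; Ω_i). Then x̄ minimizes D(x) := Σ_{i=1}^3 d(x; Ω_i) over X if and only if one of the following holds: (i) there is an index i (say i = 1 after relabeling) with x̄ ∈ Ω_1, x̄ ∉ Ω_2, x̄ ∉ Ω_3, ⟨a_2, a_3⟩ ≤ −1/2, and −a_2 − a_3 ∈ N(x̄; Ω_1); (ii) x̄ ∉ Ω_1 ∪ Ω_2 ∪ Ω_3 and ⟨a_i,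 a_j⟩ = −1/2 for all i ≠ j with i, j ∈ {1, 2, 3}. -/
section FTAux
open Metric


open Metric

variable {X : Type*} [NormedAddCommGroup X] [InnerProductSpace ℝ X]

/-- general lower bound helper -/
lemma le_infDist_of_forall {Ω : Set X} (hne : Ω.Nonempty) {y : X} {c : ℝ}
    (h : ∀ ω ∈ Ω, c ≤ ‖y - ω‖) : c ≤ infDist y Ω := by
  by_contra hlt
  obtain ⟨ω, hω, hd⟩ := (infDist_lt_iff hne).1 (lt_of_not_ge hlt)
  rw [dist_eq_norm] at hd
  exact absurd (h ω hω) (not_le.2 hd)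

/-- projection characterization -/
lemma proj_inner_le {Ω : Set X} (hcv : Convex ℝ Ω) {x p : X} (hp : p ∈ Ω)
    (hd : ‖x - p‖ = infDist x Ω) : ∀ ω ∈ Ω, (inner ℝ (x - p) (ω - p) : ℝ) ≤ 0 := by
  rw [show infDist x Ω = ⨅ w : Ω, ‖x - w‖ by
    rw [infDist_eq_iInf]; congr 1; ext w; rw [dist_eq_norm]] at hd
  exact (norm_eq_iInf_iff_real_inner_le_zero hcv hp).1 hd

/-- Lemma A: subgradient inequality at a point outside the set -/
lemma lowerA {Ω : Set X} (hne : Ω.Nonempty) (hcv : Convex ℝ Ω) {x p : X} (hp : p ∈ Ω)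
    (hd : ‖x - p‖ = infDist x Ω) (hpos : 0 < infDist x Ω) :
    ∀ y : X, infDist x Ω + (inner ℝ ((infDist x Ω)⁻¹ • (x - p)) (y - x) : ℝ) ≤ infDist y Ω := by
  intro y
  set d := infDist x Ω with hdd
  set a : X := d⁻¹ • (x - p) with haa
  have hna : ‖a‖ = 1 := by
    rw [haa, norm_smul, Real.norm_eq_abs, abs_of_pos (inv_pos.2 hpos), hd]
    field_simp
  apply le_infDist_of_forall hne
  intro ω hω
  have h1 : (inner ℝ a (y - ω) : ℝ) ≤ ‖y - ω‖ := by
    calc (inner ℝ a (y - ω) : ℝ) ≤ ‖a‖ * ‖y - ω‖ := real_inner_le_norm _ _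
    _ = ‖y - ω‖ := by rw [hna, one_mul]
  have h2 : (inner ℝ a (x - p) : ℝ) = d := by
    rw [haa, real_inner_smul_left, real_inner_self_eq_norm_sq, hd]
    field_simp
  have h3 : (inner ℝ a (p - ω) : ℝ) ≥ 0 := by
    have := proj_inner_le hcv hp hd ω hω
    rw [haa, real_inner_smul_left]
    have : (inner ℝ (x - p) (p - ω) : ℝ) ≥ 0 := by
      have h4 : (p : X) - ω = -(ω - p) := by abel
      rw [h4, inner_neg_right]; linarith [proj_inner_le hcv hp hd ω hω]
    positivity
  have hsplit : (inner ℝ a (y - ω) : ℝ) = inner ℝ a (y - x) + inner ℝ a (x - p) + inner ℝ a (p - ω) := by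
    rw [← inner_add_right, ← inner_add_right]; congr 1; abel
  linarith [h1, hsplit ▸ h1]

/-- Lemma B: lower bound via a normal vector of norm ≤ 1 at a point of the set -/
lemma lowerB {Ω : Set X} (hne : Ω.Nonempty) {x v : X} (hx : x ∈ Ω) (hv : ‖v‖ ≤ 1)
    (hn : ∀ ω ∈ Ω, (inner ℝ v (ω - x) : ℝ) ≤ 0) :
    ∀ y : X, (inner ℝ v (y - x) : ℝ) ≤ infDist y Ω := by
  intro y
  apply le_infDist_of_forall hne
  intro ω hω
  have h1 : (inner ℝ v (y - ω) : ℝ) ≤ ‖y - ω‖ := by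
    calc (inner ℝ v (y - ω) : ℝ) ≤ ‖v‖ * ‖y - ω‖ := real_inner_le_norm _ _
    _ ≤ 1 * ‖y - ω‖ := by gcongr
    _ = ‖y - ω‖ := one_mul _
  have hsplit : (inner ℝ v (y - ω) : ℝ) = inner ℝ v (y - x) + inner ℝ v (x - ω) := by
    rw [← inner_add_right]; congr 1; abel
  have h2 : (0:ℝ) ≤ inner ℝ v (x - ω) + inner ℝ v (ω - x) := by
    rw [← inner_add_right]; simp
  linarith [hn ω hω]

/-- first-order upper bound on the norm -/
lemma norm_bound {u h : X} {t : ℝ} (hu : u ≠ 0) (ht : 0 < t) (htb : t * ‖h‖ ≤ ‖u‖) :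
    ‖u + t • h‖ ≤ ‖u‖ + t * (inner ℝ (‖u‖⁻¹ • u) h : ℝ) + t^2 * (‖h‖^2 / ‖u‖) := by
  have hun : (0:ℝ) < ‖u‖ := norm_pos_iff.2 hu
  set α : ℝ := inner ℝ (‖u‖⁻¹ • u) h with hα
  set K : ℝ := ‖h‖^2 / ‖u‖ with hK
  have hKnn : 0 ≤ K := by positivity
  have hαabs : |α| ≤ ‖h‖ := by
    rw [hα]
    calc |(inner ℝ (‖u‖⁻¹ • u) h : ℝ)| ≤ ‖(‖u‖⁻¹ • u)‖ * ‖h‖ := abs_real_inner_le_norm _ _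
    _ = ‖h‖ := by rw [norm_smul, Real.norm_eq_abs, abs_of_pos (inv_pos.2 hun)]; field_simp
  have huh : (inner ℝ u h : ℝ) = ‖u‖ * α := by
    rw [hα, real_inner_smul_left]; field_simp
  have hRnn : 0 ≤ ‖u‖ + t * α + t^2 * K := by
    have h1 : -‖h‖ ≤ α := (abs_le.1 hαabs).1
    nlinarith [hKnn, ht.le, sq_nonneg t]
  have hsq : ‖u + t • h‖^2 ≤ (‖u‖ + t * α + t^2 * K)^2 := by
    have hexp : ‖u + t • h‖^2 = ‖u‖^2 + 2 * t * (‖u‖ * α) + t^2 * ‖h‖^2 := by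
      rw [← real_inner_self_eq_norm_sq]
      rw [inner_add_add_self, real_inner_smul_left, real_inner_smul_right,
        real_inner_smul_left, real_inner_smul_right, real_inner_self_eq_norm_sq, huh,
        real_inner_self_eq_norm_sq]
      have hcomm : (inner ℝ h u : ℝ) = ‖u‖ * α := by rw [real_inner_comm]; exact huh
      rw [hcomm]; ring
    have hKu : K * ‖u‖ = ‖h‖^2 := by rw [hK]; field_simp
    nlinarith [sq_nonneg (t * α + t^2 * K), sq_nonneg t, hKnn]
  nlinarith [norm_nonneg (u + t • h), hRnn, hsq]

/-- limit lemma -/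
lemma limit_lemma {S K δ : ℝ} (hδ : 0 < δ) (hK : 0 ≤ K)
    (H : ∀ t : ℝ, 0 < t → t ≤ δ → 0 ≤ t * S + t^2 * K) : 0 ≤ S := by
  by_contra hS
  push_neg at hS
  set t : ℝ := min δ ((-S) / (2 * (K + 1))) with htdef
  have ht1 : 0 < (-S) / (2 * (K + 1)) := div_pos (by linarith) (by positivity)
  have htpos : 0 < t := lt_min hδ ht1
  have htδ : t ≤ δ := min_le_left _ _
  have htS : t ≤ (-S) / (2 * (K + 1)) := min_le_right _ _
  have h0 := H t htpos htδ
  have h2 : 0 ≤ S + t * K := by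
    have := mul_pos htpos (by nlinarith [sq_nonneg t] : (0:ℝ) < 1)
    nlinarith [sq_nonneg t, htpos]
  have h3 : t * K ≤ ((-S) / (2 * (K + 1))) * K := by
    apply mul_le_mul_of_nonneg_right htS hK
  have h4 : ((-S) / (2 * (K + 1))) * K < -S := by
    rw [div_mul_eq_mul_div, div_lt_iff₀ (by positivity)]
    nlinarith
  linarith

lemma unit_norm {u : X} {d : ℝ} (h : ‖u‖ = d) (hd : 0 < d) : ‖d⁻¹ • u‖ = 1 := by
  rw [norm_smul, Real.norm_eq_abs, abs_of_pos (inv_pos.2 hd), h]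
  field_simp

/-- two-term directional inequality -/
lemma dir2 {u₂ u₃ h : X} (h2 : u₂ ≠ 0) (h3 : u₃ ≠ 0) {E : ℝ} (hE : 0 ≤ E)
    (H : ∀ t : ℝ, 0 < t → t ≤ 1 → ‖u₂‖ + ‖u₃‖ ≤ t * E + ‖u₂ + t • h‖ + ‖u₃ + t • h‖) :
    0 ≤ E + (inner ℝ (‖u₂‖⁻¹ • u₂) h : ℝ) + (inner ℝ (‖u₃‖⁻¹ • u₃) h : ℝ) := by
  have hn2 : (0:ℝ) < ‖u₂‖ := norm_pos_iff.2 h2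
  have hn3 : (0:ℝ) < ‖u₃‖ := norm_pos_iff.2 h3
  set δ : ℝ := min 1 (min (‖u₂‖/(‖h‖+1)) (‖u₃‖/(‖h‖+1))) with hδdef
  have hδ : 0 < δ := lt_min one_pos (lt_min (by positivity) (by positivity))
  have hK : (0:ℝ) ≤ ‖h‖^2/‖u₂‖ + ‖h‖^2/‖u₃‖ := by positivity
  apply limit_lemma hδ hK
  intro t ht htδ
  have hb2 : t * ‖h‖ ≤ ‖u₂‖ := by
    have h5 : t ≤ ‖u₂‖/(‖h‖+1) := le_trans htδ (le_trans (min_le_right _ _) (min_le_left _ _))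
    rw [le_div_iff₀ (by positivity)] at h5
    nlinarith [norm_nonneg h]
  have hb3 : t * ‖h‖ ≤ ‖u₃‖ := by
    have h5 : t ≤ ‖u₃‖/(‖h‖+1) := le_trans htδ (le_trans (min_le_right _ _) (min_le_right _ _))
    rw [le_div_iff₀ (by positivity)] at h5
    nlinarith [norm_nonneg h]
  have n2 := norm_bound h2 ht hb2
  have n3 := norm_bound h3 ht hb3
  have hH := H t ht (le_trans htδ (min_le_left _ _))
  nlinarith [n2, n3, hH]

/-- three-term directional inequality -/
lemma dir3 {u₁ u₂ u₃ h : X} (h1 : u₁ ≠ 0) (h2 : u₂ ≠ 0) (h3 : u₃ ≠ 0)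
    (H : ∀ t : ℝ, 0 < t → t ≤ 1 →
      ‖u₁‖ + ‖u₂‖ + ‖u₃‖ ≤ ‖u₁ + t • h‖ + ‖u₂ + t • h‖ + ‖u₃ + t • h‖) :
    0 ≤ (inner ℝ (‖u₁‖⁻¹ • u₁) h : ℝ) + (inner ℝ (‖u₂‖⁻¹ • u₂) h : ℝ)
      + (inner ℝ (‖u₃‖⁻¹ • u₃) h : ℝ) := by
  have hn1 : (0:ℝ) < ‖u₁‖ := norm_pos_iff.2 h1
  have hn2 : (0:ℝ) < ‖u₂‖ := norm_pos_iff.2 h2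
  have hn3 : (0:ℝ) < ‖u₃‖ := norm_pos_iff.2 h3
  set δ : ℝ := min (min 1 (‖u₁‖/(‖h‖+1))) (min (‖u₂‖/(‖h‖+1)) (‖u₃‖/(‖h‖+1))) with hδdef
  have hδ : 0 < δ := lt_min (lt_min one_pos (by positivity)) (lt_min (by positivity) (by positivity))
  have hK : (0:ℝ) ≤ ‖h‖^2/‖u₁‖ + ‖h‖^2/‖u₂‖ + ‖h‖^2/‖u₃‖ := by positivity
  apply limit_lemma hδ hK
  intro t ht htδ
  have key : ∀ c : ℝ, t ≤ c / (‖h‖+1) → t * ‖h‖ ≤ c := by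
    intro c hc
    rw [le_div_iff₀ (by positivity)] at hc
    nlinarith [norm_nonneg h]
  have hb1 := key _ (le_trans htδ (le_trans (min_le_left _ _) (min_le_right _ _)))
  have hb2 := key _ (le_trans htδ (le_trans (min_le_right _ _) (min_le_left _ _)))
  have hb3 := key _ (le_trans htδ (le_trans (min_le_right _ _) (min_le_right _ _)))
  have n1 := norm_bound h1 ht hb1
  have n2 := norm_bound h2 ht hb2
  have n3 := norm_bound h3 ht hb3
  have hH := H t ht (le_trans htδ (le_trans (min_le_left _ _) (min_le_left _ _)))
  nlinarith [n1, n2, n3, hH]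

/-- infDist at a shifted point bounded by shifted norm -/
lemma infDist_shift_le {Ω : Set X} {p : X} (hp : p ∈ Ω) (xb : X) (t : ℝ) (h : X) :
    infDist (xb + t • h) Ω ≤ ‖(xb - p) + t • h‖ := by
  have := infDist_le_dist_of_mem (x := xb + t • h) hp
  rwa [dist_eq_norm, show xb + t • h - p = (xb - p) + t • h by abel] at this

/-- forward direction, case xb ∈ Ω₁ -/
lemma fwd_case1 {Ω₁ Ω₂ Ω₃ : Set X}
    (h₂ne : Ω₂.Nonempty) (h₃ne : Ω₃.Nonempty)
    (h₂cl : IsClosed Ω₂) (h₃cl : IsClosed Ω₃) (h₁cv : Convex ℝ Ω₁)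
    {xb p₂ p₃ a₂ a₃ : X}
    (hp₂ : p₂ ∈ Ω₂ ∧ ‖xb - p₂‖ = infDist xb Ω₂)
    (hp₃ : p₃ ∈ Ω₃ ∧ ‖xb - p₃‖ = infDist xb Ω₃)
    (ha₂ : a₂ = (infDist xb Ω₂)⁻¹ • (xb - p₂))
    (ha₃ : a₃ = (infDist xb Ω₃)⁻¹ • (xb - p₃))
    (hx1 : xb ∈ Ω₁) (hx2 : xb ∉ Ω₂) (hx3 : xb ∉ Ω₃)
    (hmin : ∀ x : X, infDist xb Ω₁ + infDist xb Ω₂ + infDist xb Ω₃ ≤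
        infDist x Ω₁ + infDist x Ω₂ + infDist x Ω₃) :
    (inner ℝ a₂ a₃ : ℝ) ≤ -(1/2) ∧ ∀ x ∈ Ω₁, (inner ℝ (-a₂ - a₃) (x - xb) : ℝ) ≤ 0 := by
  have d₁0 : infDist xb Ω₁ = 0 := infDist_zero_of_mem hx1
  have d₂pos : 0 < infDist xb Ω₂ := (h₂cl.notMem_iff_infDist_pos h₂ne).1 hx2
  have d₃pos : 0 < infDist xb Ω₃ := (h₃cl.notMem_iff_infDist_pos h₃ne).1 hx3
  have hu2 : ‖xb - p₂‖ = infDist xb Ω₂ := hp₂.2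
  have hu3 : ‖xb - p₃‖ = infDist xb Ω₃ := hp₃.2
  have hu2ne : xb - p₂ ≠ 0 := by
    intro hc; rw [hc, norm_zero] at hu2; linarith
  have hu3ne : xb - p₃ ≠ 0 := by
    intro hc; rw [hc, norm_zero] at hu3; linarith
  have ha₂' : a₂ = ‖xb - p₂‖⁻¹ • (xb - p₂) := by rw [ha₂, hu2]
  have ha₃' : a₃ = ‖xb - p₃‖⁻¹ • (xb - p₃) := by rw [ha₃, hu3]
  have hna₂ : ‖a₂‖ = 1 := by rw [ha₂]; exact unit_norm hu2 d₂pos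
  have hna₃ : ‖a₃‖ = 1 := by rw [ha₃]; exact unit_norm hu3 d₃pos
  constructor
  · -- inner ℝ a₂ a₃ ≤ -1/2
    set h : X := -(a₂ + a₃) with hh
    have hd2 : (0:ℝ) ≤ ‖h‖ + (inner ℝ (‖xb - p₂‖⁻¹ • (xb - p₂)) h : ℝ)
        + (inner ℝ (‖xb - p₃‖⁻¹ • (xb - p₃)) h : ℝ) := by
      apply dir2 hu2ne hu3ne (norm_nonneg h)
      intro t ht ht1
      have b1 : infDist (xb + t • h) Ω₁ ≤ t * ‖h‖ := by
        have := infDist_le_dist_of_mem (x := xb + t • h) hx1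
        rw [dist_eq_norm, show xb + t • h - xb = t • h by abel, norm_smul,
          Real.norm_eq_abs, abs_of_pos ht] at this
        exact this
      have b2 := infDist_shift_le hp₂.1 xb t h
      have b3 := infDist_shift_le hp₃.1 xb t h
      have hm := hmin (xb + t • h)
      rw [d₁0] at hm
      rw [hu2, hu3]
      linarith
    rw [← ha₂', ← ha₃'] at hd2
    have hinner : (inner ℝ a₂ h : ℝ) + (inner ℝ a₃ h : ℝ) = -‖a₂ + a₃‖^2 := by
      rw [hh, inner_neg_right, inner_neg_right, ← real_inner_self_eq_norm_sq,
        inner_add_add_self]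
      have := real_inner_comm a₂ a₃
      simp only [inner_add_right]
      linarith [real_inner_comm a₂ a₃]
    have hnh : ‖h‖ = ‖a₂ + a₃‖ := by rw [hh, norm_neg]
    have hsq : ‖a₂ + a₃‖^2 = 2 + 2 * (inner ℝ a₂ a₃ : ℝ) := by
      rw [norm_add_sq_real, hna₂, hna₃]; ring
    have hle1 : ‖a₂ + a₃‖^2 ≤ 1 := by
      nlinarith [norm_nonneg (a₂ + a₃), sq_nonneg (‖a₂ + a₃‖ - 1)]
    linarith
  · -- normal cone
    intro ω hω
    set h : X := ω - xb with hh
    have hd2 : (0:ℝ) ≤ 0 + (inner ℝ (‖xb - p₂‖⁻¹ • (xb - p₂)) h : ℝ)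
        + (inner ℝ (‖xb - p₃‖⁻¹ • (xb - p₃)) h : ℝ) := by
      apply dir2 hu2ne hu3ne le_rfl
      intro t ht ht1
      have hyΩ : xb + t • h ∈ Ω₁ := by
        have heq : xb + t • h = (1 - t) • xb + t • ω := by
          rw [hh, smul_sub, sub_smul, one_smul]; abel
        rw [heq]
        exact h₁cv hx1 hω (by linarith) ht.le (by ring)
      have b1 : infDist (xb + t • h) Ω₁ = 0 := infDist_zero_of_mem hyΩ
      have b2 := infDist_shift_le hp₂.1 xb t h
      have b3 := infDist_shift_le hp₃.1 xb t h
      have hm := hmin (xb + t • h)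
      rw [d₁0] at hm
      rw [hu2, hu3]
      linarith
    rw [← ha₂', ← ha₃'] at hd2
    have : (inner ℝ (-a₂ - a₃) (ω - xb) : ℝ) = -(inner ℝ a₂ h : ℝ) - (inner ℝ a₃ h : ℝ) := by
      rw [hh, inner_sub_left, inner_neg_left]
    linarith

/-- forward direction, case xb in none of the sets -/
lemma fwd_case4 {Ω₁ Ω₂ Ω₃ : Set X}
    (h₁ne : Ω₁.Nonempty) (h₂ne : Ω₂.Nonempty) (h₃ne : Ω₃.Nonempty)
    (h₁cl : IsClosed Ω₁) (h₂cl : IsClosed Ω₂) (h₃cl : IsClosed Ω₃)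
    {xb p₁ p₂ p₃ a₁ a₂ a₃ : X}
    (hp₁ : p₁ ∈ Ω₁ ∧ ‖xb - p₁‖ = infDist xb Ω₁)
    (hp₂ : p₂ ∈ Ω₂ ∧ ‖xb - p₂‖ = infDist xb Ω₂)
    (hp₃ : p₃ ∈ Ω₃ ∧ ‖xb - p₃‖ = infDist xb Ω₃)
    (ha₁ : a₁ = (infDist xb Ω₁)⁻¹ • (xb - p₁))
    (ha₂ : a₂ = (infDist xb Ω₂)⁻¹ • (xb - p₂))
    (ha₃ : a₃ = (infDist xb Ω₃)⁻¹ • (xb - p₃))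
    (hx1 : xb ∉ Ω₁) (hx2 : xb ∉ Ω₂) (hx3 : xb ∉ Ω₃)
    (hmin : ∀ x : X, infDist xb Ω₁ + infDist xb Ω₂ + infDist xb Ω₃ ≤
        infDist x Ω₁ + infDist x Ω₂ + infDist x Ω₃) :
    (inner ℝ a₁ a₂ : ℝ) = -(1/2) ∧ (inner ℝ a₂ a₃ : ℝ) = -(1/2) ∧ (inner ℝ a₁ a₃ : ℝ) = -(1/2) := by
  have d₁pos : 0 < infDist xb Ω₁ := (h₁cl.notMem_iff_infDist_pos h₁ne).1 hx1
  have d₂pos : 0 < infDist xb Ω₂ := (h₂cl.notMem_iff_infDist_pos h₂ne).1 hx2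
  have d₃pos : 0 < infDist xb Ω₃ := (h₃cl.notMem_iff_infDist_pos h₃ne).1 hx3
  have hu1 : ‖xb - p₁‖ = infDist xb Ω₁ := hp₁.2
  have hu2 : ‖xb - p₂‖ = infDist xb Ω₂ := hp₂.2
  have hu3 : ‖xb - p₃‖ = infDist xb Ω₃ := hp₃.2
  have hu1ne : xb - p₁ ≠ 0 := by intro hc; rw [hc, norm_zero] at hu1; linarith
  have hu2ne : xb - p₂ ≠ 0 := by intro hc; rw [hc, norm_zero] at hu2; linarith
  have hu3ne : xb - p₃ ≠ 0 := by intro hc; rw [hc, norm_zero] at hu3; linarith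
  have ha₁' : a₁ = ‖xb - p₁‖⁻¹ • (xb - p₁) := by rw [ha₁, hu1]
  have ha₂' : a₂ = ‖xb - p₂‖⁻¹ • (xb - p₂) := by rw [ha₂, hu2]
  have ha₃' : a₃ = ‖xb - p₃‖⁻¹ • (xb - p₃) := by rw [ha₃, hu3]
  have hna₁ : ‖a₁‖ = 1 := by rw [ha₁]; exact unit_norm hu1 d₁pos
  have hna₂ : ‖a₂‖ = 1 := by rw [ha₂]; exact unit_norm hu2 d₂pos
  have hna₃ : ‖a₃‖ = 1 := by rw [ha₃]; exact unit_norm hu3 d₃pos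
  have hdir : ∀ h : X, 0 ≤ (inner ℝ a₁ h : ℝ) + (inner ℝ a₂ h : ℝ) + (inner ℝ a₃ h : ℝ) := by
    intro h
    have := dir3 hu1ne hu2ne hu3ne (h := h) ?_
    · rw [← ha₁', ← ha₂', ← ha₃'] at this; exact this
    intro t ht ht1
    have b1 := infDist_shift_le hp₁.1 xb t h
    have b2 := infDist_shift_le hp₂.1 xb t h
    have b3 := infDist_shift_le hp₃.1 xb t h
    have hm := hmin (xb + t • h)
    rw [hu1, hu2, hu3]
    linarith
  have hsum : a₁ + a₂ + a₃ = 0 := by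
    have h1 := hdir (-(a₁ + a₂ + a₃))
    have h2 : (inner ℝ a₁ (-(a₁+a₂+a₃)) : ℝ) + (inner ℝ a₂ (-(a₁+a₂+a₃)) : ℝ)
        + (inner ℝ a₃ (-(a₁+a₂+a₃)) : ℝ)
        = -(inner ℝ (a₁+a₂+a₃) (a₁+a₂+a₃) : ℝ) := by
      simp only [inner_neg_right, inner_add_left]
      ring
    rw [h2] at h1
    exact (real_inner_self_nonpos).1 (by linarith)
  have e1 : (inner ℝ a₁ (a₁ + a₂ + a₃) : ℝ) = 0 := by rw [hsum, inner_zero_right]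
  have e2 : (inner ℝ a₂ (a₁ + a₂ + a₃) : ℝ) = 0 := by rw [hsum, inner_zero_right]
  have e3 : (inner ℝ a₃ (a₁ + a₂ + a₃) : ℝ) = 0 := by rw [hsum, inner_zero_right]
  rw [inner_add_right, inner_add_right, real_inner_self_eq_norm_sq, hna₁] at e1
  rw [inner_add_right, inner_add_right, real_inner_self_eq_norm_sq, hna₂,
    real_inner_comm a₁ a₂] at e2
  rw [inner_add_right, inner_add_right, real_inner_self_eq_norm_sq, hna₃,
    real_inner_comm a₁ a₃, real_inner_comm a₂ a₃] at e3
  norm_num at e1 e2 e3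
  refine ⟨by linarith, by linarith, by linarith⟩

/-- backward direction, case (i) -/
lemma back_case1 {Ω₁ Ω₂ Ω₃ : Set X}
    (h₂ne : Ω₂.Nonempty) (h₃ne : Ω₃.Nonempty)
    (h₂cl : IsClosed Ω₂) (h₃cl : IsClosed Ω₃)
    (h₂cv : Convex ℝ Ω₂) (h₃cv : Convex ℝ Ω₃)
    {xb p₂ p₃ a₂ a₃ : X}
    (hp₂ : p₂ ∈ Ω₂ ∧ ‖xb - p₂‖ = infDist xb Ω₂)
    (hp₃ : p₃ ∈ Ω₃ ∧ ‖xb - p₃‖ = infDist xb Ω₃)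
    (ha₂ : a₂ = (infDist xb Ω₂)⁻¹ • (xb - p₂))
    (ha₃ : a₃ = (infDist xb Ω₃)⁻¹ • (xb - p₃))
    (hx1 : xb ∈ Ω₁) (hx2 : xb ∉ Ω₂) (hx3 : xb ∉ Ω₃)
    (hs : (inner ℝ a₂ a₃ : ℝ) ≤ -(1/2))
    (hN : ∀ x ∈ Ω₁, (inner ℝ (-a₂ - a₃) (x - xb) : ℝ) ≤ 0) :
    ∀ x : X, infDist xb Ω₁ + infDist xb Ω₂ + infDist xb Ω₃ ≤
        infDist x Ω₁ + infDist x Ω₂ + infDist x Ω₃ := by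
  have d₁0 : infDist xb Ω₁ = 0 := infDist_zero_of_mem hx1
  have d₂pos : 0 < infDist xb Ω₂ := (h₂cl.notMem_iff_infDist_pos h₂ne).1 hx2
  have d₃pos : 0 < infDist xb Ω₃ := (h₃cl.notMem_iff_infDist_pos h₃ne).1 hx3
  have hna₂ : ‖a₂‖ = 1 := by rw [ha₂]; exact unit_norm hp₂.2 d₂pos
  have hna₃ : ‖a₃‖ = 1 := by rw [ha₃]; exact unit_norm hp₃.2 d₃pos
  have hvnorm : ‖-a₂ - a₃‖ ≤ 1 := by
    have h1 : ‖-a₂ - a₃‖ = ‖a₂ + a₃‖ := by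
      rw [show -a₂ - a₃ = -(a₂ + a₃) by abel, norm_neg]
    have h2 : ‖a₂ + a₃‖^2 = 2 + 2 * (inner ℝ a₂ a₃ : ℝ) := by
      rw [norm_add_sq_real, hna₂, hna₃]; ring
    nlinarith [norm_nonneg (a₂ + a₃), sq_nonneg (‖a₂ + a₃‖ - 1)]
  have L1 := lowerB (Ω := Ω₁) ⟨xb, hx1⟩ hx1 hvnorm hN
  have L2 := lowerA h₂ne h₂cv hp₂.1 hp₂.2 d₂pos
  have L3 := lowerA h₃ne h₃cv hp₃.1 hp₃.2 d₃pos
  intro x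
  have l1 := L1 x
  have l2 := L2 x
  have l3 := L3 x
  rw [← ha₂] at l2
  rw [← ha₃] at l3
  have e : (inner ℝ (-a₂ - a₃) (x - xb) : ℝ) = -(inner ℝ a₂ (x - xb) : ℝ)
      - (inner ℝ a₃ (x - xb) : ℝ) := by
    rw [inner_sub_left, inner_neg_left]
  rw [d₁0]
  linarith [e ▸ l1]

/-- backward direction, case (ii) -/
lemma back_case4 {Ω₁ Ω₂ Ω₃ : Set X}
    (h₁ne : Ω₁.Nonempty) (h₂ne : Ω₂.Nonempty) (h₃ne : Ω₃.Nonempty)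
    (h₁cl : IsClosed Ω₁) (h₂cl : IsClosed Ω₂) (h₃cl : IsClosed Ω₃)
    (h₁cv : Convex ℝ Ω₁) (h₂cv : Convex ℝ Ω₂) (h₃cv : Convex ℝ Ω₃)
    {xb p₁ p₂ p₃ a₁ a₂ a₃ : X}
    (hp₁ : p₁ ∈ Ω₁ ∧ ‖xb - p₁‖ = infDist xb Ω₁)
    (hp₂ : p₂ ∈ Ω₂ ∧ ‖xb - p₂‖ = infDist xb Ω₂)
    (hp₃ : p₃ ∈ Ω₃ ∧ ‖xb - p₃‖ = infDist xb Ω₃)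
    (ha₁ : a₁ = (infDist xb Ω₁)⁻¹ • (xb - p₁))
    (ha₂ : a₂ = (infDist xb Ω₂)⁻¹ • (xb - p₂))
    (ha₃ : a₃ = (infDist xb Ω₃)⁻¹ • (xb - p₃))
    (hx1 : xb ∉ Ω₁) (hx2 : xb ∉ Ω₂) (hx3 : xb ∉ Ω₃)
    (h12 : (inner ℝ a₁ a₂ : ℝ) = -(1/2)) (h23 : (inner ℝ a₂ a₃ : ℝ) = -(1/2))
    (h13 : (inner ℝ a₁ a₃ : ℝ) = -(1/2)) :
    ∀ x : X, infDist xb Ω₁ + infDist xb Ω₂ + infDist xb Ω₃ ≤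
        infDist x Ω₁ + infDist x Ω₂ + infDist x Ω₃ := by
  have d₁pos : 0 < infDist xb Ω₁ := (h₁cl.notMem_iff_infDist_pos h₁ne).1 hx1
  have d₂pos : 0 < infDist xb Ω₂ := (h₂cl.notMem_iff_infDist_pos h₂ne).1 hx2
  have d₃pos : 0 < infDist xb Ω₃ := (h₃cl.notMem_iff_infDist_pos h₃ne).1 hx3
  have hna₁ : ‖a₁‖ = 1 := by rw [ha₁]; exact unit_norm hp₁.2 d₁pos
  have hna₂ : ‖a₂‖ = 1 := by rw [ha₂]; exact unit_norm hp₂.2 d₂pos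
  have hna₃ : ‖a₃‖ = 1 := by rw [ha₃]; exact unit_norm hp₃.2 d₃pos
  have hsum : a₁ + a₂ + a₃ = 0 := by
    have hz : (inner ℝ (a₁ + a₂ + a₃) (a₁ + a₂ + a₃) : ℝ) ≤ 0 := by
      simp only [inner_add_left, inner_add_right]
      rw [real_inner_self_eq_norm_sq a₁, real_inner_self_eq_norm_sq a₂,
        real_inner_self_eq_norm_sq a₃, hna₁, hna₂, hna₃,
        real_inner_comm a₁ a₂, real_inner_comm a₁ a₃, real_inner_comm a₂ a₃,
        h12, h23, h13]
      norm_num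
    exact real_inner_self_nonpos.1 hz
  have L1 := lowerA h₁ne h₁cv hp₁.1 hp₁.2 d₁pos
  have L2 := lowerA h₂ne h₂cv hp₂.1 hp₂.2 d₂pos
  have L3 := lowerA h₃ne h₃cv hp₃.1 hp₃.2 d₃pos
  intro x
  have l1 := L1 x; have l2 := L2 x; have l3 := L3 x
  rw [← ha₁] at l1; rw [← ha₂] at l2; rw [← ha₃] at l3
  have e : (inner ℝ a₁ (x - xb) : ℝ) + (inner ℝ a₂ (x - xb) : ℝ)
      + (inner ℝ a₃ (x - xb) : ℝ) = 0 := by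
    rw [← inner_add_left, ← inner_add_left, hsum, inner_zero_left]
  linarith

end FTAux


/-- Characterizations of generalized Fermat–Torricelli points for three pairwise
disjoint nonempty closed convex sets in a Hilbert space: `x̄` minimizes
`D(x) = d(x; Ω₁) + d(x; Ω₂) + d(x; Ω₃)` if and only if either
(i) `x̄` lies in one of the sets, does not lie in the other two, and (with
`a_i = (x̄ − P_{Ω_i}(x̄))/d(x̄; Ω_i)` for the other two indices) `⟨a_i, a_j⟩ ≤ −1/2`
and `−a_i − a_j ∈ N(x̄; ·)` for the set containing `x̄`; or
(ii) `x̄` lies in none of the sets and `⟨a_i, a_j⟩ = −1/2` for all `i ≠ j`. -/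
theorem stmt_10 {X : Type*} [NormedAddCommGroup X] [InnerProductSpace ℝ X]
    [CompleteSpace X]
    (Ω₁ Ω₂ Ω₃ : Set X)
    (h₁ne : Ω₁.Nonempty) (h₂ne : Ω₂.Nonempty) (h₃ne : Ω₃.Nonempty)
    (h₁cl : IsClosed Ω₁) (h₂cl : IsClosed Ω₂) (h₃cl : IsClosed Ω₃)
    (h₁cv : Convex ℝ Ω₁) (h₂cv : Convex ℝ Ω₂) (h₃cv : Convex ℝ Ω₃)
    (h12 : Disjoint Ω₁ Ω₂) (h13 : Disjoint Ω₁ Ω₃) (h23 : Disjoint Ω₂ Ω₃)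
    (xb : X) (p₁ p₂ p₃ : X)
    (hp₁ : p₁ ∈ Ω₁ ∧ ‖xb - p₁‖ = Metric.infDist xb Ω₁)
    (hp₂ : p₂ ∈ Ω₂ ∧ ‖xb - p₂‖ = Metric.infDist xb Ω₂)
    (hp₃ : p₃ ∈ Ω₃ ∧ ‖xb - p₃‖ = Metric.infDist xb Ω₃)
    (a₁ a₂ a₃ : X)
    (ha₁ : a₁ = (Metric.infDist xb Ω₁)⁻¹ • (xb - p₁))
    (ha₂ : a₂ = (Metric.infDist xb Ω₂)⁻¹ • (xb - p₂))
    (ha₃ : a₃ = (Metric.infDist xb Ω₃)⁻¹ • (xb - p₃)) :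
    (∀ x : X, Metric.infDist xb Ω₁ + Metric.infDist xb Ω₂ + Metric.infDist xb Ω₃ ≤
        Metric.infDist x Ω₁ + Metric.infDist x Ω₂ + Metric.infDist x Ω₃) ↔
      ((xb ∈ Ω₁ ∧ xb ∉ Ω₂ ∧ xb ∉ Ω₃ ∧ (inner ℝ a₂ a₃ : ℝ) ≤ -(1/2) ∧
          ∀ x ∈ Ω₁, (inner ℝ (-a₂ - a₃) (x - xb) : ℝ) ≤ 0) ∨
        (xb ∈ Ω₂ ∧ xb ∉ Ω₁ ∧ xb ∉ Ω₃ ∧ (inner ℝ a₁ a₃ : ℝ) ≤ -(1/2) ∧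
          ∀ x ∈ Ω₂, (inner ℝ (-a₁ - a₃) (x - xb) : ℝ) ≤ 0) ∨
        (xb ∈ Ω₃ ∧ xb ∉ Ω₁ ∧ xb ∉ Ω₂ ∧ (inner ℝ a₁ a₂ : ℝ) ≤ -(1/2) ∧
          ∀ x ∈ Ω₃, (inner ℝ (-a₁ - a₂) (x - xb) : ℝ) ≤ 0) ∨
        (xb ∉ Ω₁ ∧ xb ∉ Ω₂ ∧ xb ∉ Ω₃ ∧ (inner ℝ a₁ a₂ : ℝ) = -(1/2) ∧
          (inner ℝ a₂ a₃ : ℝ) = -(1/2) ∧ (inner ℝ a₁ a₃ : ℝ) = -(1/2))) := by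
  constructor
  · intro hmin
    by_cases m1 : xb ∈ Ω₁
    · have m2 : xb ∉ Ω₂ := Set.disjoint_left.1 h12 m1
      have m3 : xb ∉ Ω₃ := Set.disjoint_left.1 h13 m1
      obtain ⟨hs, hN⟩ := fwd_case1 h₂ne h₃ne h₂cl h₃cl h₁cv hp₂ hp₃ ha₂ ha₃ m1 m2 m3 hmin
      exact Or.inl ⟨m1, m2, m3, hs, hN⟩
    · by_cases m2 : xb ∈ Ω₂
      · have m3 : xb ∉ Ω₃ := Set.disjoint_left.1 h23 m2
        obtain ⟨hs, hN⟩ := fwd_case1 h₁ne h₃ne h₁cl h₃cl h₂cv hp₁ hp₃ ha₁ ha₃ m2 m1 m3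
          (fun x => by linarith [hmin x])
        exact Or.inr (Or.inl ⟨m2, m1, m3, hs, hN⟩)
      · by_cases m3 : xb ∈ Ω₃
        · obtain ⟨hs, hN⟩ := fwd_case1 h₁ne h₂ne h₁cl h₂cl h₃cv hp₁ hp₂ ha₁ ha₂ m3 m1 m2
            (fun x => by linarith [hmin x])
          exact Or.inr (Or.inr (Or.inl ⟨m3, m1, m2, hs, hN⟩))
        · obtain ⟨e12, e23, e13⟩ := fwd_case4 h₁ne h₂ne h₃ne h₁cl h₂cl h₃cl
            hp₁ hp₂ hp₃ ha₁ ha₂ ha₃ m1 m2 m3 hmin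
          exact Or.inr (Or.inr (Or.inr ⟨m1, m2, m3, e12, e23, e13⟩))
  · rintro (⟨hx1, hx2, hx3, hs, hN⟩ | ⟨hx2, hx1, hx3, hs, hN⟩ |
      ⟨hx3, hx1, hx2, hs, hN⟩ | ⟨hx1, hx2, hx3, e12, e23, e13⟩)
    · exact back_case1 h₂ne h₃ne h₂cl h₃cl h₂cv h₃cv hp₂ hp₃ ha₂ ha₃ hx1 hx2 hx3 hs hN
    · have h' := back_case1 h₁ne h₃ne h₁cl h₃cl h₁cv h₃cv hp₁ hp₃ ha₁ ha₃ hx2 hx1 hx3 hs hN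
      intro x; linarith [h' x]
    · have h' := back_case1 h₁ne h₂ne h₁cl h₂cl h₁cv h₂cv hp₁ hp₂ ha₁ ha₂ hx3 hx1 hx2 hs hN
      intro x; linarith [h' x]
    · exact back_case4 h₁ne h₂ne h₃ne h₁cl h₂cl h₃cl h₁cv h₂cv h₃cv
        hp₁ hp₂ hp₃ ha₁ ha₂ ha₃ hx1 hx2 hx3 e12 e23 e13
end

section
/- In X = ℝ² with the Euclidean inner product, let F = [−1, 1] × [−1, 1] and let Ω = [a − r, a + r] × [b − r, b + r] be a square of right position centered at c = (a, b) with radius r > 0. Define v(x̄₁, x̄₂) := (1, 0) if |x̄₂ − b| ≤ x̄₁ − a and x̄₁ > a + r; (−1, 0) if |x̄₂ − b| ≤ a − x̄₁ and x̄₁ < a − r; (0, 1) if |x̄₁ − a| ≤ x̄₂ − b and x̄₂ > b + r; (0, −1) if |x̄₁ − a| ≤ b − x̄₂ and x̄₂ < b − r; and (0, 0) if (x̄₁, x̄₂) ∈ Ω. Then in each of these cases v(x̄₁, x̄₂) is a subgradient of the minimal time function T^F_Ω at (x̄₁, x̄₂), i.e., v(x̄₁, x̄₂) ∈ ∂T^F_Ω(x̄₁,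 x̄₂). -/
/-- The subdifferential of convex analysis of `φ : ℝ² → (−∞, ∞]` at `z`,
via the Euclidean pairing on `ℝ × ℝ`. -/
def subdiff2 (φ : ℝ × ℝ → EReal) (z : ℝ × ℝ) : Set (ℝ × ℝ) :=
  {v | ∀ w : ℝ × ℝ, ((v.1 * (w.1 - z.1) + v.2 * (w.2 - z.2) : ℝ) : EReal) + φ z ≤ φ w}

lemma clamp_dist (c r t x : ℝ) (hr : 0 < r) (h : |x - c| - r ≤ t) (ht : 0 ≤ t) :
    |max (c - r) (min (c + r) x) - x| ≤ t := by
  rcases le_total (c + r) x with hc | hc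
  · rw [min_eq_left hc, max_eq_right (by linarith)]
    rw [abs_of_nonpos (by linarith)]
    rcases abs_cases (x - c) with ⟨g, _⟩ | ⟨g, _⟩ <;> linarith
  · rw [min_eq_right hc]
    rcases le_total x (c - r) with hd | hd
    · rw [max_eq_left hd, abs_of_nonneg (by linarith)]
      rcases abs_cases (x - c) with ⟨g, _⟩ | ⟨g, _⟩ <;> linarith
    · rw [max_eq_right hd]; simpa using ht

lemma clamp_mem (c r x : ℝ) (hr : 0 < r) :
    max (c - r) (min (c + r) x) ∈ Set.Icc (c - r) (c + r) :=
  ⟨le_max_left _ _, max_le (by linarith) (min_le_left _ _)⟩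

lemma minTime_sq (a b r : ℝ) (hr : 0 < r) (x : ℝ × ℝ) :
    minTime (Set.Icc (-1 : ℝ) 1 ×ˢ Set.Icc (-1 : ℝ) 1)
      (Set.Icc (a - r) (a + r) ×ˢ Set.Icc (b - r) (b + r)) x
    = ((max (max |x.1 - a| |x.2 - b|) r - r : ℝ) : EReal) := by
  set T := max (max |x.1 - a| |x.2 - b|) r - r with hT
  have hT0 : 0 ≤ T := by
    have := le_max_right (max |x.1 - a| |x.2 - b|) r; linarith
  have h1 : |x.1 - a| - r ≤ T := by
    have := le_trans (le_max_left |x.1 - a| |x.2 - b|)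
      (le_max_left (max |x.1 - a| |x.2 - b|) r); linarith
  have h2 : |x.2 - b| - r ≤ T := by
    have := le_trans (le_max_right |x.1 - a| |x.2 - b|)
      (le_max_left (max |x.1 - a| |x.2 - b|) r); linarith
  apply le_antisymm
  · apply sInf_le
    set p1 := max (a - r) (min (a + r) x.1) with hp1
    set p2 := max (b - r) (min (b + r) x.2) with hp2
    have hp1d := clamp_dist a r T x.1 hr h1 hT0
    have hp2d := clamp_dist b r T x.2 hr h2 hT0
    have hp1m := clamp_mem a r x.1 hr
    have hp2m := clamp_mem b r x.2 hr
    rcases eq_or_lt_of_le hT0 with hTz | hTp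
    · refine ⟨T, hT0, rfl, (0, 0), ?_, ?_⟩
      · constructor <;> constructor <;> norm_num
      · have e1 : p1 = x.1 := by
          have := abs_eq_zero.mp (le_antisymm (hTz ▸ hp1d) (abs_nonneg _)); linarith
        have e2 : p2 = x.2 := by
          have := abs_eq_zero.mp (le_antisymm (hTz ▸ hp2d) (abs_nonneg _)); linarith
        have hx : x + T • ((0:ℝ), (0:ℝ)) = x := by simp
        rw [hx]
        exact ⟨e1 ▸ hp1m, e2 ▸ hp2m⟩
    · refine ⟨T, hT0, rfl, ((p1 - x.1) / T, (p2 - x.2) / T), ?_, ?_⟩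
      · constructor
        · rw [Set.mem_Icc, ← abs_le, abs_div, abs_of_pos hTp, div_le_one hTp]; exact hp1d
        · rw [Set.mem_Icc, ← abs_le, abs_div, abs_of_pos hTp, div_le_one hTp]; exact hp2d
      · have e1 : x.1 + T * ((p1 - x.1) / T) = p1 := by field_simp; ring
        have e2 : x.2 + T * ((p2 - x.2) / T) = p2 := by field_simp; ring
        constructor
        · show x.1 + T * ((p1 - x.1) / T) ∈ _
          rw [e1]; exact hp1m
        · show x.2 + T * ((p2 - x.2) / T) ∈ _
          rw [e2]; exact hp2m
  · apply le_sInf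
    rintro e ⟨t, ht, rfl, f, ⟨hf1, hf2⟩, ⟨hm1, hm2⟩⟩
    rw [EReal.coe_le_coe_iff]
    simp only [Set.mem_Icc] at hf1 hf2
    have hm1' : a - r ≤ x.1 + t * f.1 ∧ x.1 + t * f.1 ≤ a + r := hm1
    have hm2' : b - r ≤ x.2 + t * f.2 ∧ x.2 + t * f.2 ≤ b + r := hm2
    have a1 : |x.1 - a| ≤ r + t := by
      rcases abs_cases (x.1 - a) with ⟨h, _⟩ | ⟨h, _⟩ <;> rw [h] <;>
        nlinarith [hm1'.1, hm1'.2, hf1.1, hf1.2]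
    have a2 : |x.2 - b| ≤ r + t := by
      rcases abs_cases (x.2 - b) with ⟨h, _⟩ | ⟨h, _⟩ <;> rw [h] <;>
        nlinarith [hm2'.1, hm2'.2, hf2.1, hf2.2]
    have : max (max |x.1 - a| |x.2 - b|) r ≤ t + r :=
      max_le (max_le (by linarith) (by linarith)) (by linarith)
    linarith

/-- Subgradients of minimal time functions with square dynamics
`F = [−1,1] × [−1,1]` and square target `Ω = [a−r, a+r] × [b−r, b+r]`. -/
theorem stmt_14 (a b r : ℝ) (hr : 0 < r)
    (F : Set (ℝ × ℝ)) (hF : F = Set.Icc (-1 : ℝ) 1 ×ˢ Set.Icc (-1 : ℝ) 1)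
    (Ω : Set (ℝ × ℝ)) (hΩ : Ω = Set.Icc (a - r) (a + r) ×ˢ Set.Icc (b - r) (b + r))
    (xb : ℝ × ℝ) :
    (|xb.2 - b| ≤ xb.1 - a → a + r < xb.1 →
      ((1, 0) : ℝ × ℝ) ∈ subdiff2 (minTime F Ω) xb) ∧
    (|xb.2 - b| ≤ a - xb.1 → xb.1 < a - r →
      ((-1, 0) : ℝ × ℝ) ∈ subdiff2 (minTime F Ω) xb) ∧
    (|xb.1 - a| ≤ xb.2 - b → b + r < xb.2 →
      ((0, 1) : ℝ × ℝ) ∈ subdiff2 (minTime F Ω) xb) ∧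
    (|xb.1 - a| ≤ b - xb.2 → xb.2 < b - r →
      ((0, -1) : ℝ × ℝ) ∈ subdiff2 (minTime F Ω) xb) ∧
    (xb ∈ Ω → ((0, 0) : ℝ × ℝ) ∈ subdiff2 (minTime F Ω) xb) := by
  subst hF hΩ
  have key : ∀ x : ℝ × ℝ, minTime (Set.Icc (-1 : ℝ) 1 ×ˢ Set.Icc (-1 : ℝ) 1)
      (Set.Icc (a - r) (a + r) ×ˢ Set.Icc (b - r) (b + r)) x
      = ((max (max |x.1 - a| |x.2 - b|) r - r : ℝ) : EReal) := fun x => minTime_sq a b r hr x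
  have wb1 : ∀ w : ℝ × ℝ, w.1 - a ≤ max (max |w.1 - a| |w.2 - b|) r := fun w =>
    le_trans (le_abs_self _) (le_trans (le_max_left _ _) (le_max_left _ _))
  have wb1' : ∀ w : ℝ × ℝ, a - w.1 ≤ max (max |w.1 - a| |w.2 - b|) r := fun w =>
    le_trans (by rw [abs_sub_comm]; exact le_abs_self _)
      (le_trans (le_max_left _ _) (le_max_left _ _))
  have wb2 : ∀ w : ℝ × ℝ, w.2 - b ≤ max (max |w.1 - a| |w.2 - b|) r := fun w =>
    le_trans (le_abs_self _) (le_trans (le_max_right _ _) (le_max_left _ _))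
  have wb2' : ∀ w : ℝ × ℝ, b - w.2 ≤ max (max |w.1 - a| |w.2 - b|) r := fun w =>
    le_trans (by rw [abs_sub_comm]; exact le_abs_self _)
      (le_trans (le_max_right _ _) (le_max_left _ _))
  refine ⟨?_, ?_, ?_, ?_, ?_⟩
  · intro h1 h2 w
    rw [key, key, ← EReal.coe_add, EReal.coe_le_coe_iff]
    have e : max (max |xb.1 - a| |xb.2 - b|) r = xb.1 - a := by
      rw [abs_of_pos (by linarith : (0:ℝ) < xb.1 - a), max_eq_left h1,
        max_eq_left (by linarith)]
    rw [e]
    have := wb1 w; norm_num; linarith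
  · intro h1 h2 w
    rw [key, key, ← EReal.coe_add, EReal.coe_le_coe_iff]
    have e : max (max |xb.1 - a| |xb.2 - b|) r = a - xb.1 := by
      rw [abs_sub_comm, abs_of_pos (by linarith : (0:ℝ) < a - xb.1), max_eq_left h1,
        max_eq_left (by linarith)]
    rw [e]
    have := wb1' w; norm_num; linarith
  · intro h1 h2 w
    rw [key, key, ← EReal.coe_add, EReal.coe_le_coe_iff]
    have e : max (max |xb.1 - a| |xb.2 - b|) r = xb.2 - b := by
      rw [abs_of_pos (by linarith : (0:ℝ) < xb.2 - b), max_eq_right h1,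
        max_eq_left (by linarith)]
    rw [e]
    have := wb2 w; norm_num; linarith
  · intro h1 h2 w
    rw [key, key, ← EReal.coe_add, EReal.coe_le_coe_iff]
    have e : max (max |xb.1 - a| |xb.2 - b|) r = b - xb.2 := by
      rw [abs_sub_comm xb.2 b, abs_of_pos (by linarith : (0:ℝ) < b - xb.2), max_eq_right h1,
        max_eq_left (by linarith)]
    rw [e]
    have := wb2' w; norm_num; linarith
  · intro hx w
    rw [key, key, ← EReal.coe_add, EReal.coe_le_coe_iff]
    obtain ⟨⟨hx1, hx2⟩, ⟨hx3, hx4⟩⟩ := hx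
    have e : max (max |xb.1 - a| |xb.2 - b|) r = r := by
      rw [max_eq_right]
      exact max_le (abs_le.mpr ⟨by linarith, by linarith⟩)
        (abs_le.mpr ⟨by linarith, by linarith⟩)
    rw [e]
    have := le_max_right (max |w.1 - a| |w.2 - b|) r; norm_num
end

section
/- Let X be a real normed space, let F ⊆ X be a nonempty closed bounded convex set with 0 in the interior of F, and let Ω ⊆ X be a nonempty closed set. Then the minimal time function T^F_Ω is Lipschitz continuous on X, i.e., there exists L ≥ 0 such that |T^F_Ω(x) − T^F_Ω(y)| ≤ L‖x − y‖ for all x, y ∈ X; in particular T^F_Ω is finite everywhere. -/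
lemma ereal_sInf_coe_image (S : Set ℝ) (hne : S.Nonempty) (hbd : BddBelow S) :
    sInf ((fun t : ℝ => (t : EReal)) '' S) = ((sInf S : ℝ) : EReal) := by
  apply le_antisymm
  · rw [← EReal.le_of_forall_lt_iff_le]
    intro z hz
    have : ∃ t ∈ S, t < z := by
      by_contra h
      push_neg at h
      have : (z : ℝ) ≤ sInf S := le_csInf hne h
      exact absurd hz (not_lt.2 (EReal.coe_le_coe_iff.2 this))
    obtain ⟨t, htS, htz⟩ := this
    exact le_trans (sInf_le ⟨t, htS, rfl⟩) (EReal.coe_le_coe_iff.2 htz.le)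
  · apply le_sInf
    rintro r ⟨t, htS, rfl⟩
    exact EReal.coe_le_coe_iff.2 (csInf_le hbd htS)

/-- If `0` lies in the interior of the dynamics `F`, then the minimal time
function `T^F_Ω` is finite everywhere and Lipschitz continuous on `X`. -/
theorem stmt_18 {X : Type*} [NormedAddCommGroup X] [NormedSpace ℝ X]
    (F : Set X) (hFne : F.Nonempty) (hFcl : IsClosed F)
    (hFbd : Bornology.IsBounded F) (hFconv : Convex ℝ F)
    (h0F : (0 : X) ∈ interior F)
    (Ω : Set X) (hΩne : Ω.Nonempty) (hΩcl : IsClosed Ω) :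
    (∀ x : X, minTime F Ω x ≠ ⊤) ∧
    ∃ L : ℝ, 0 ≤ L ∧ ∀ x y : X,
      |(minTime F Ω x).toReal - (minTime F Ω y).toReal| ≤ L * ‖x - y‖ := by
  -- get a closed ball around 0 inside F
  have hF0 : F ∈ nhds (0 : X) := mem_interior_iff_mem_nhds.1 h0F
  obtain ⟨ε, hε, hball⟩ := Metric.mem_nhds_iff.1 hF0
  set r : ℝ := ε / 2 with hr
  have hrpos : 0 < r := by positivity
  have hballF : Metric.closedBall (0 : X) r ⊆ F := by
    intro v hv
    apply hball
    simp only [Metric.mem_closedBall] at hv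
    simp only [Metric.mem_ball]
    calc dist v 0 ≤ r := hv
      _ < ε := by simp [hr]; linarith
  have h0inF : (0 : X) ∈ F := interior_subset h0F
  -- the real-valued set
  set S : X → Set ℝ := fun x => {t : ℝ | 0 ≤ t ∧ ∃ f ∈ F, x + t • f ∈ Ω} with hS
  have hSne : ∀ x, (S x).Nonempty := by
    intro x
    obtain ⟨ω, hω⟩ := hΩne
    rcases eq_or_ne x ω with h | h
    · exact ⟨0, le_refl 0, 0, h0inF, by simp [h, hω]⟩
    · set t : ℝ := ‖ω - x‖ / r with ht
      have hnx : (0:ℝ) < ‖ω - x‖ := by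
        rw [norm_pos_iff, sub_ne_zero]; exact fun hh => h hh.symm
      have htpos : 0 < t := by positivity
      refine ⟨t, htpos.le, t⁻¹ • (ω - x), ?_, ?_⟩
      · apply hballF
        simp only [Metric.mem_closedBall, dist_zero_right, norm_smul, norm_inv,
          Real.norm_eq_abs, abs_of_pos htpos]
        rw [ht]
        field_simp
        exact le_rfl
      · rw [smul_smul, mul_inv_cancel₀ (ne_of_gt htpos), one_smul]
        simpa using hω
  have hSbd : ∀ x, BddBelow (S x) := fun x => ⟨0, fun t ht => ht.1⟩
  -- transfer lemma
  have htrans : ∀ x y : X, ∀ t ∈ S y, t + ‖x - y‖ / r ∈ S x := by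
    intro x y t ht
    obtain ⟨ht0, f, hfF, hΩf⟩ := ht
    rcases eq_or_ne x y with h | h
    · subst h; simpa using ⟨ht0, f, hfF, hΩf⟩
    · set d : ℝ := ‖x - y‖ / r with hd
      have hnx : (0:ℝ) < ‖x - y‖ := by rw [norm_pos_iff, sub_ne_zero]; exact h
      have hdpos : 0 < d := by positivity
      have hspos : 0 < t + d := by linarith
      set v : X := (r / ‖x - y‖) • (y - x) with hv
      have hvF : v ∈ F := by
        apply hballF
        simp only [Metric.mem_closedBall, dist_zero_right, hv, norm_smul,
          Real.norm_eq_abs, abs_of_pos (div_pos hrpos hnx)]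
        rw [norm_sub_rev y x, div_mul_cancel₀ _ (ne_of_gt hnx)]
      set g : X := (t / (t + d)) • f + (d / (t + d)) • v with hg
      have hgF : g ∈ F := by
        apply hFconv hfF hvF (by positivity) (by positivity)
        field_simp
      refine ⟨by linarith, g, hgF, ?_⟩
      have hdv : d • v = y - x := by
        rw [hv, smul_smul, hd]
        field_simp
        rw [one_smul]
      have : x + (t + d) • g = y + t • f := by
        rw [hg, smul_add, smul_smul, smul_smul,
          mul_div_cancel₀ _ (ne_of_gt hspos), mul_div_cancel₀ _ (ne_of_gt hspos), hdv]
        abel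
      rw [this]; exact hΩf
  -- identification of minTime with the real infimum
  have hmt : ∀ x : X, minTime F Ω x = ((sInf (S x) : ℝ) : EReal) := by
    intro x
    rw [minTime, ← ereal_sInf_coe_image (S x) (hSne x) (hSbd x)]
    congr 1
    ext e
    constructor
    · rintro ⟨t, ht0, rfl, hf⟩
      exact ⟨t, ⟨ht0, hf⟩, rfl⟩
    · rintro ⟨t, ⟨ht0, hf⟩, rfl⟩
      exact ⟨t, ht0, rfl, hf⟩
  constructor
  · intro x; rw [hmt x]; exact EReal.coe_ne_top _
  · refine ⟨r⁻¹, inv_nonneg.2 hrpos.le, fun x y => ?_⟩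
    rw [hmt x, hmt y, EReal.toReal_coe, EReal.toReal_coe]
    have key : ∀ a b : X, sInf (S a) - sInf (S b) ≤ r⁻¹ * ‖a - b‖ := by
      intro a b
      have h1 : sInf (S a) - ‖a - b‖ / r ≤ sInf (S b) :=
        le_csInf (hSne b) (fun t ht => by
          have := csInf_le (hSbd a) (htrans a b t ht); linarith)
      rw [div_eq_inv_mul] at h1
      linarith
    rw [abs_sub_le_iff]
    refine ⟨key x y, ?_⟩
    rw [norm_sub_rev]
    exact key y x
end
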